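/- arXiv:2209.12103 — 7 statements merged into one kernel-verified Lean document; each statement's English description precedes it below -/
import Mathlib

section
/- Let p ∈ (0,1], α ≥ 0, and let G be a (p,α)-jumbled graph on n vertices. Then for all subsets X, Y ⊆ V(G) with |X|·|Y| ≥ 100·(α/p)², there exist subsets X′ ⊆ X and Y′ ⊆ Y with |X′| ≥ 9|X|/10 and |Y′| ≥ 9|Y|/10 such that every vertex v ∈ X′ has at least p|Y′|/10 neighbours in Y′ and every vertex u ∈ Y′ has at least p|X′|/10 neighbours in X′. -/
/-- A graph `G` is `(p, α)`-jumbled if for all vertex subsets `X, Y` we have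
`|e(X,Y) - p|X||Y|| ≤ α √(|X||Y|)`. -/
def IsJumbled {V : Type*} [Fintype V] [DecidableEq V] (G : SimpleGraph V) [DecidableRel G.Adj]
    (p α : ℝ) : Prop :=
  ∀ X Y : Finset V,
    |((SimpleGraph.interedges G X Y).card : ℝ) - p * X.card * Y.card| ≤
      α * Real.sqrt ((X.card : ℝ) * Y.card)

open Finset

lemma card_interedges_sum_left {V : Type*} [Fintype V] [DecidableEq V] (G : SimpleGraph V)
    [DecidableRel G.Adj] (A B : Finset V) :
    (SimpleGraph.interedges G A B).card = ∑ a ∈ A, (B.filter (fun y => G.Adj a y)).card := by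
  rw [SimpleGraph.interedges, Rel.interedges_eq_biUnion, Finset.card_biUnion]
  · simp
  · intro x hx y hy hxy
    rw [Function.onFun, Finset.disjoint_left]
    intro e he he'
    simp only [Finset.mem_map, Function.Embedding.coeFn_mk] at he he'
    obtain ⟨a, -, rfl⟩ := he
    obtain ⟨b, -, hb⟩ := he'
    exact hxy (congrArg Prod.fst hb).symm

lemma card_interedges_sum_right {V : Type*} [Fintype V] [DecidableEq V] (G : SimpleGraph V)
    [DecidableRel G.Adj] (A B : Finset V) :
    (SimpleGraph.interedges G A B).card = ∑ b ∈ B, (A.filter (fun x => G.Adj b x)).card := by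
  rw [show SimpleGraph.interedges G A B = Rel.interedges G.Adj A B from rfl,
    @Rel.card_interedges_comm _ G.Adj _ G.symm]
  exact card_interedges_sum_left G B A

/-- Arithmetic contradiction lemma: if a set of deficit `a` crossed the `F/10` threshold,
jumbledness is violated. Here `b` is the size of the surviving part of the other side,
`F` the size of the full other side, `e` the edge count between the deficit set and the
surviving part. -/
lemma cross_false (p α a b F e : ℝ) (hp0 : 0 < p) (hα : 0 ≤ α)
    (ha : 1 ≤ a) (hb : 1 ≤ b) (hbF : b ≤ F) (hb9 : 9 * F / 10 ≤ b)
    (hlow : p * a * b - α * Real.sqrt (a * b) ≤ e) (hup : e ≤ p * F * a / 10)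
    (hbig : 10 * (α / p) ^ 2 < a * F) : False := by
  have hF1 : (1 : ℝ) ≤ F := le_trans hb hbF
  have hpa : (0 : ℝ) ≤ p * a := mul_nonneg hp0.le (by linarith)
  have h9 : p * a * (9 * F / 10) ≤ p * a * b := mul_le_mul_of_nonneg_left hb9 hpa
  have hsq : Real.sqrt (a * b) ≤ Real.sqrt (a * F) :=
    Real.sqrt_le_sqrt (mul_le_mul_of_nonneg_left hbF (by linarith))
  have hαs : α * Real.sqrt (a * b) ≤ α * Real.sqrt (a * F) :=
    mul_le_mul_of_nonneg_left hsq hα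
  have hmain : 0.8 * p * a * F ≤ α * Real.sqrt (a * F) := by linarith
  have hsnn : (0 : ℝ) ≤ a * F := mul_nonneg (by linarith) (by linarith)
  have hnn : (0 : ℝ) ≤ 0.8 * p * a * F := by
    have := mul_nonneg (mul_nonneg hp0.le (show (0:ℝ) ≤ a by linarith))
      (show (0:ℝ) ≤ F by linarith)
    linarith
  have h2 := mul_self_le_mul_self hnn hmain
  have h3 : Real.sqrt (a * F) * Real.sqrt (a * F) = a * F := Real.mul_self_sqrt hsnn
  have key : (0.8 * p * a * F) ^ 2 ≤ α ^ 2 * (a * F) := by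
    calc (0.8 * p * a * F) ^ 2 = (0.8 * p * a * F) * (0.8 * p * a * F) := by ring
      _ ≤ (α * Real.sqrt (a * F)) * (α * Real.sqrt (a * F)) := h2
      _ = α ^ 2 * (Real.sqrt (a * F) * Real.sqrt (a * F)) := by ring
      _ = α ^ 2 * (a * F) := by rw [h3]
  have hAF1 : (1 : ℝ) ≤ a * F := by
    have := mul_le_mul ha hF1 zero_le_one (by linarith : (0:ℝ) ≤ a)
    linarith
  have q : 0.64 * p ^ 2 * (a * F) ≤ α ^ 2 := by
    have hpos : (0 : ℝ) < a * F := by linarith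
    rw [← mul_le_mul_iff_left₀ hpos]
    linarith [key]
  have hbig' : 10 * (α ^ 2 / p ^ 2) < a * F := by
    have := hbig; rw [div_pow] at this; linarith
  have h4' : 0.64 * p ^ 2 * (10 * (α ^ 2 / p ^ 2)) < 0.64 * p ^ 2 * (a * F) :=
    mul_lt_mul_of_pos_left hbig' (by positivity)
  have h5 : 0.64 * p ^ 2 * (10 * (α ^ 2 / p ^ 2)) = 6.4 * α ^ 2 := by
    field_simp; ring
  linarith [q, h4', h5, sq_nonneg α]

set_option maxHeartbeats 1000000 in
lemma jumbled_aux {V : Type*} [Fintype V] [DecidableEq V] (G : SimpleGraph V) [DecidableRel G.Adj]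
    (p α : ℝ) (hp0 : 0 < p) (hα : 0 ≤ α) (hG : IsJumbled G p α)
    (X Y : Finset V) (hsize : 100 * (α / p) ^ 2 ≤ (X.card : ℝ) * Y.card) :
    ∀ n (A B : Finset V), A.card + B.card ≤ n → A ⊆ X → B ⊆ Y →
    (((X \ A).card : ℝ) ≤ (X.card : ℝ) / 10) → (((Y \ B).card : ℝ) ≤ (Y.card : ℝ) / 10) →
    ((∑ v ∈ X \ A, ((B.filter (fun y => G.Adj v y)).card : ℝ)) ≤
      p * Y.card * (X \ A).card / 10) →
    ((∑ u ∈ Y \ B, ((A.filter (fun x => G.Adj u x)).card : ℝ)) ≤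
      p * X.card * (Y \ B).card / 10) →
    ∃ X' ⊆ X, ∃ Y' ⊆ Y,
      9 * (X.card : ℝ) / 10 ≤ X'.card ∧ 9 * (Y.card : ℝ) / 10 ≤ Y'.card ∧
      (∀ v ∈ X', p * (Y'.card : ℝ) / 10 ≤ ((Y'.filter (fun y => G.Adj v y)).card : ℝ)) ∧
      (∀ u ∈ Y', p * (X'.card : ℝ) / 10 ≤ ((X'.filter (fun x => G.Adj u x)).card : ℝ)) := by
  intro n
  induction n with
  | zero =>
    intro A B hn hAX hBY sX sY _ _
    have hA : A = ∅ := Finset.card_eq_zero.mp (by omega)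
    have hB : B = ∅ := Finset.card_eq_zero.mp (by omega)
    refine ⟨A, hAX, B, hBY, ?_, ?_, ?_, ?_⟩
    · have h := Finset.cast_card_sdiff (R := ℝ) hAX; linarith
    · have h := Finset.cast_card_sdiff (R := ℝ) hBY; linarith
    · intro v hv; rw [hA] at hv; simp at hv
    · intro u hu; rw [hB] at hu; simp at hu
  | succ n ih =>
    intro A B hn hAX hBY sX sY invX invY
    by_cases hvx : ∃ v ∈ A, ((B.filter (fun y => G.Adj v y)).card : ℝ) < p * B.card / 10
    · obtain ⟨v, hvA, hdeg⟩ := hvx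
      have hvX : v ∈ X := hAX hvA
      have hvnA : v ∉ X \ A := by simp [Finset.mem_sdiff, hvA]
      have hXA' : X \ A.erase v = insert v (X \ A) := by
        ext x
        by_cases hx : x = v
        · subst hx; simp [hvX, hvA]
        · simp only [Finset.mem_sdiff, Finset.mem_erase, Finset.mem_insert, hx,
            false_or, ne_eq, not_false_iff, true_and]
      have hA'X : A.erase v ⊆ X := (Finset.erase_subset _ _).trans hAX
      have hBc : (B.card : ℝ) ≤ (Y.card : ℝ) := Nat.cast_le.mpr (Finset.card_le_card hBY)
      have invX' : (∑ w ∈ X \ A.erase v, ((B.filter (fun y => G.Adj w y)).card : ℝ)) ≤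
          p * Y.card * (X \ A.erase v).card / 10 := by
        rw [hXA', Finset.sum_insert hvnA, Finset.card_insert_of_notMem hvnA]
        push_cast
        nlinarith [hdeg, invX, hBc, hp0.le]
      have invY' : (∑ u ∈ Y \ B, (((A.erase v).filter (fun x => G.Adj u x)).card : ℝ)) ≤
          p * X.card * (Y \ B).card / 10 := by
        refine le_trans (Finset.sum_le_sum fun u _ => ?_) invY
        exact_mod_cast Finset.card_le_card
          (Finset.filter_subset_filter _ (Finset.erase_subset _ _))
      by_cases hsz : ((X \ A.erase v).card : ℝ) ≤ (X.card : ℝ) / 10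
      · refine ih (A.erase v) B ?_ hA'X hBY hsz sY invX' invY'
        have h1 : 0 < A.card := Finset.card_pos.mpr ⟨v, hvA⟩
        have h2 : (A.erase v).card = A.card - 1 := Finset.card_erase_of_mem hvA
        omega
      · exfalso
        push_neg at hsz
        have hpB : (0 : ℝ) < p * B.card :=
          by linarith [hdeg, (Nat.cast_nonneg (B.filter (fun y => G.Adj v y)).card : (0:ℝ) ≤ ((B.filter (fun y => G.Adj v y)).card : ℝ))]
        have hB0 : (0 : ℝ) < (B.card : ℝ) := by by_contra h; push_neg at h; nlinarith
        have hB1 : (1 : ℝ) ≤ (B.card : ℝ) := Nat.one_le_cast.mpr (Nat.cast_pos.mp hB0)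
        have hD1 : (1 : ℝ) ≤ ((X \ A.erase v).card : ℝ) := by
          have hm : v ∈ X \ A.erase v := by rw [hXA']; exact Finset.mem_insert_self _ _
          exact Nat.one_le_cast.mpr (Finset.card_pos.mpr ⟨v, hm⟩)
        have hBY9 : 9 * (Y.card : ℝ) / 10 ≤ (B.card : ℝ) := by
          have h := Finset.cast_card_sdiff (R := ℝ) hBY; linarith
        have hj := hG (X \ A.erase v) B
        have heq : ((SimpleGraph.interedges G (X \ A.erase v) B).card : ℝ) =
            ∑ w ∈ X \ A.erase v, ((B.filter (fun y => G.Adj w y)).card : ℝ) := by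
          rw [card_interedges_sum_left]; push_cast; rfl
        rw [heq] at hj
        have hYpos : (0 : ℝ) < (Y.card : ℝ) := by linarith
        refine cross_false p α ((X \ A.erase v).card) B.card Y.card
          (∑ w ∈ X \ A.erase v, ((B.filter (fun y => G.Adj w y)).card : ℝ))
          hp0 hα hD1 hB1 hBc hBY9 ?_ invX' ?_
        · linarith [(abs_le.mp hj).1]
        · nlinarith [mul_lt_mul_of_pos_right hsz hYpos, hsize]
    · by_cases hvy : ∃ u ∈ B, ((A.filter (fun x => G.Adj u x)).card : ℝ) < p * A.card / 10
      · obtain ⟨u, huB, hdeg⟩ := hvy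
        have huY : u ∈ Y := hBY huB
        have hunB : u ∉ Y \ B := by simp [Finset.mem_sdiff, huB]
        have hYB' : Y \ B.erase u = insert u (Y \ B) := by
          ext x
          by_cases hx : x = u
          · subst hx; simp [huY, huB]
          · simp only [Finset.mem_sdiff, Finset.mem_erase, Finset.mem_insert, hx,
              false_or, ne_eq, not_false_iff, true_and]
        have hB'Y : B.erase u ⊆ Y := (Finset.erase_subset _ _).trans hBY
        have hAc : (A.card : ℝ) ≤ (X.card : ℝ) := Nat.cast_le.mpr (Finset.card_le_card hAX)
        have invY' : (∑ w ∈ Y \ B.erase u, ((A.filter (fun x => G.Adj w x)).card : ℝ)) ≤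
            p * X.card * (Y \ B.erase u).card / 10 := by
          rw [hYB', Finset.sum_insert hunB, Finset.card_insert_of_notMem hunB]
          push_cast
          nlinarith [hdeg, invY, hAc, hp0.le]
        have invX' : (∑ w ∈ X \ A, (((B.erase u).filter (fun y => G.Adj w y)).card : ℝ)) ≤
            p * Y.card * (X \ A).card / 10 := by
          refine le_trans (Finset.sum_le_sum fun w _ => ?_) invX
          exact_mod_cast Finset.card_le_card
            (Finset.filter_subset_filter _ (Finset.erase_subset _ _))
        by_cases hsz : ((Y \ B.erase u).card : ℝ) ≤ (Y.card : ℝ) / 10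
        · refine ih A (B.erase u) ?_ hAX hB'Y sX hsz invX' invY'
          have h1 : 0 < B.card := Finset.card_pos.mpr ⟨u, huB⟩
          have h2 : (B.erase u).card = B.card - 1 := Finset.card_erase_of_mem huB
          omega
        · exfalso
          push_neg at hsz
          have hpA : (0 : ℝ) < p * A.card :=
            by linarith [hdeg, (Nat.cast_nonneg (A.filter (fun x => G.Adj u x)).card : (0:ℝ) ≤ ((A.filter (fun x => G.Adj u x)).card : ℝ))]
          have hA0 : (0 : ℝ) < (A.card : ℝ) := by by_contra h; push_neg at h; nlinarith
          have hA1 : (1 : ℝ) ≤ (A.card : ℝ) := Nat.one_le_cast.mpr (Nat.cast_pos.mp hA0)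
          have hD1 : (1 : ℝ) ≤ ((Y \ B.erase u).card : ℝ) := by
            have hm : u ∈ Y \ B.erase u := by rw [hYB']; exact Finset.mem_insert_self _ _
            exact Nat.one_le_cast.mpr (Finset.card_pos.mpr ⟨u, hm⟩)
          have hAX9 : 9 * (X.card : ℝ) / 10 ≤ (A.card : ℝ) := by
            have h := Finset.cast_card_sdiff (R := ℝ) hAX; linarith
          have hj := hG A (Y \ B.erase u)
          have heq : ((SimpleGraph.interedges G A (Y \ B.erase u)).card : ℝ) =
              ∑ w ∈ Y \ B.erase u, ((A.filter (fun x => G.Adj w x)).card : ℝ) := by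
            rw [card_interedges_sum_right]; push_cast; rfl
          rw [heq] at hj
          have hXpos : (0 : ℝ) < (X.card : ℝ) := by linarith
          have hcomm : Real.sqrt (((Y \ B.erase u).card : ℝ) * A.card) =
              Real.sqrt ((A.card : ℝ) * (Y \ B.erase u).card) := by rw [mul_comm]
          refine cross_false p α ((Y \ B.erase u).card) A.card X.card
            (∑ w ∈ Y \ B.erase u, ((A.filter (fun x => G.Adj w x)).card : ℝ))
            hp0 hα hD1 hA1 hAc hAX9 ?_ invY' ?_
          · have hcomm2 : α * Real.sqrt (((Y \ B.erase u).card : ℝ) * A.card) =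
                α * Real.sqrt ((A.card : ℝ) * (Y \ B.erase u).card) := by rw [hcomm]
            linarith [(abs_le.mp hj).1, hcomm2]
          · nlinarith [mul_lt_mul_of_pos_right hsz hXpos, hsize]
      · push_neg at hvx hvy
        refine ⟨A, hAX, B, hBY, ?_, ?_, hvx, hvy⟩
        · have h := Finset.cast_card_sdiff (R := ℝ) hAX; linarith
        · have h := Finset.cast_card_sdiff (R := ℝ) hBY; linarith

theorem stmt_1 {V : Type*} [Fintype V] [DecidableEq V] (G : SimpleGraph V) [DecidableRel G.Adj]
    (p α : ℝ) (hp0 : 0 < p) (hp1 : p ≤ 1) (hα : 0 ≤ α) (hG : IsJumbled G p α)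
    (X Y : Finset V) (hsize : 100 * (α / p) ^ 2 ≤ (X.card : ℝ) * Y.card) :
    ∃ X' ⊆ X, ∃ Y' ⊆ Y,
      9 * (X.card : ℝ) / 10 ≤ X'.card ∧ 9 * (Y.card : ℝ) / 10 ≤ Y'.card ∧
      (∀ v ∈ X', p * (Y'.card : ℝ) / 10 ≤ ((Y'.filter (fun y => G.Adj v y)).card : ℝ)) ∧
      (∀ u ∈ Y', p * (X'.card : ℝ) / 10 ≤ ((X'.filter (fun x => G.Adj u x)).card : ℝ)) := by
  refine jumbled_aux G p α hp0 hα hG X Y hsize (X.card + Y.card) X Y le_rfl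
    (Finset.Subset.refl X) (Finset.Subset.refl Y) ?_ ?_ ?_ ?_ <;>
    simp [Finset.sdiff_self] <;> positivity
end

section
/- There exists n₀ such that the following holds for all n ≥ n₀. If G is a (p,α)-jumbled graph on n vertices with α ≤ p²n/200 and p > 10·n^{−1/3}, then G contains the Petersen graph as a subgraph. -/
/-- The Petersen graph: vertices are the 2-element subsets of a 5-element set,
adjacent iff disjoint. -/
def petersen : SimpleGraph {s : Finset (Fin 5) // s.card = 2} where
  Adj a b := Disjoint (a : Finset (Fin 5)) (b : Finset (Fin 5))
  symm := ⟨fun _ _ h => h.symm⟩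
  loopless := by
    refine ⟨?_⟩
    rintro ⟨a, ha⟩ h
    have : a = ∅ := disjoint_self.mp h
    simp [this] at ha

/-- `G` contains a copy of `F`. -/
def ContainsCopy {W V : Type*} (F : SimpleGraph W) (G : SimpleGraph V) : Prop :=
  ∃ f : W → V, Function.Injective f ∧ ∀ a b, F.Adj a b → G.Adj (f a) (f b)

/- ## Transfer of petersen to `Fin 10` -/

def petIdx : {s : Finset (Fin 5) // s.card = 2} → Fin 10 := fun s =>
  if s.1 = {1,2} then 0 else if s.1 = {3,4} then 1
  else if s.1 = {1,3} then 2 else if s.1 = {2,4} then 3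
  else if s.1 = {1,4} then 4 else if s.1 = {2,3} then 5
  else if s.1 = {0,1} then 6 else if s.1 = {0,2} then 7
  else if s.1 = {0,3} then 8 else 9

def petTbl : Fin 10 → Fin 10 → Bool := fun i j =>
  (i,j) ∈ [((0:Fin 10),(1:Fin 10)),(2,3),(4,5),(1,6),(3,6),(5,6),(1,7),(2,7),(4,7),(0,8),(3,8),(4,8),(0,9),(2,9),(5,9)] ∨
  (j,i) ∈ [((0:Fin 10),(1:Fin 10)),(2,3),(4,5),(1,6),(3,6),(5,6),(1,7),(2,7),(4,7),(0,8),(3,8),(4,8),(0,9),(2,9),(5,9)]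

instance : DecidableRel petersen.Adj := fun a b =>
  inferInstanceAs (Decidable (Disjoint a.1 b.1))

lemma petIdx_inj : Function.Injective petIdx := by decide

lemma adj_petTbl : ∀ a b, petersen.Adj a b → petTbl (petIdx a) (petIdx b) = true := by decide

lemma containsCopy_petersen_of {V : Type*} (G : SimpleGraph V) (x : Fin 10 → V)
    (hinj : Function.Injective x)
    (hadj : ∀ i j : Fin 10, petTbl i j = true → G.Adj (x i) (x j)) :
    ContainsCopy petersen G :=
  ⟨x ∘ petIdx, hinj.comp petIdx_inj, fun a b h => hadj _ _ (adj_petTbl a b h)⟩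

set_option maxHeartbeats 1000000 in
lemma containsCopy_of_verts {V : Type} (G : SimpleGraph V) (a a' b b' c c' x6 x7 x8 x9 : V)
    (n1 : a ≠ a') (n2 : a ≠ b) (n3 : a ≠ b') (n4 : a ≠ c) (n5 : a ≠ c')
    (n6 : a ≠ x6) (n7 : a ≠ x7) (n8 : a ≠ x8) (n9 : a ≠ x9)
    (n10 : a' ≠ b) (n11 : a' ≠ b') (n12 : a' ≠ c) (n13 : a' ≠ c')
    (n14 : a' ≠ x6) (n15 : a' ≠ x7) (n16 : a' ≠ x8) (n17 : a' ≠ x9)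
    (n18 : b ≠ b') (n19 : b ≠ c) (n20 : b ≠ c') (n21 : b ≠ x6) (n22 : b ≠ x7)
    (n23 : b ≠ x8) (n24 : b ≠ x9)
    (n25 : b' ≠ c) (n26 : b' ≠ c') (n27 : b' ≠ x6) (n28 : b' ≠ x7) (n29 : b' ≠ x8)
    (n30 : b' ≠ x9)
    (n31 : c ≠ c') (n32 : c ≠ x6) (n33 : c ≠ x7) (n34 : c ≠ x8) (n35 : c ≠ x9)
    (n36 : c' ≠ x6) (n37 : c' ≠ x7) (n38 : c' ≠ x8) (n39 : c' ≠ x9)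
    (n40 : x6 ≠ x7) (n41 : x6 ≠ x8) (n42 : x6 ≠ x9)
    (n43 : x7 ≠ x8) (n44 : x7 ≠ x9) (n45 : x8 ≠ x9)
    (h1 : G.Adj a a') (h2 : G.Adj b b') (h3 : G.Adj c c')
    (h4 : G.Adj x6 a') (h5 : G.Adj x6 b') (h6 : G.Adj x6 c')
    (h7 : G.Adj x7 a') (h8 : G.Adj x7 b) (h9 : G.Adj x7 c)
    (h10 : G.Adj x8 a) (h11 : G.Adj x8 b') (h12 : G.Adj x8 c)
    (h13 : G.Adj x9 a) (h14 : G.Adj x9 b) (h15 : G.Adj x9 c') :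
    ContainsCopy petersen G := by
  apply containsCopy_petersen_of G ![a,a',b,b',c,c',x6,x7,x8,x9]
  · intro i j hij
    fin_cases i <;> fin_cases j <;>
      simp only [Matrix.cons_val_zero, Matrix.cons_val_one, Matrix.head_cons,
        Matrix.cons_val_succ] at hij <;>
      first
        | rfl
        | exact absurd hij (by assumption)
        | exact absurd hij.symm (by assumption)
  · intro i j h
    fin_cases i <;> fin_cases j <;> revert h <;> intro h <;>
      first
      | exact absurd h (by decide)
      | (simp only [Matrix.cons_val_zero, Matrix.cons_val_one, Matrix.head_cons,
          Matrix.cons_val_succ]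
         first
          | exact h1 | exact h1.symm | exact h2 | exact h2.symm | exact h3 | exact h3.symm
          | exact h4 | exact h4.symm | exact h5 | exact h5.symm | exact h6 | exact h6.symm
          | exact h7 | exact h7.symm | exact h8 | exact h8.symm | exact h9 | exact h9.symm
          | exact h10 | exact h10.symm | exact h11 | exact h11.symm | exact h12 | exact h12.symm
          | exact h13 | exact h13.symm | exact h14 | exact h14.symm | exact h15 | exact h15.symm)

/- ## bad sets -/
section Bad
variable {V : Type} [Fintype V] [DecidableEq V] (G : SimpleGraph V) [DecidableRel G.Adj]

/-- vertices with few neighbours in X -/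
noncomputable def badSet (p : ℝ) (X : Finset V) : Finset V :=
  Finset.univ.filter (fun v => ((X.filter (fun x => G.Adj x v)).card : ℝ) < p/2 * X.card)

lemma card_interedges_eq_sum (X B : Finset V) :
    ((G.interedges X B).card : ℕ) = ∑ b ∈ B, (X.filter (fun x => G.Adj x b)).card := by
  rw [SimpleGraph.interedges, Rel.interedges]
  rw [Finset.card_filter, Finset.sum_product]
  rw [Finset.sum_comm]
  simp only [Finset.card_filter]

lemma good_of_not_bad {p : ℝ} {X : Finset V} {v : V} (h : v ∉ badSet G p X) :
    p/2 * X.card ≤ ((X.filter (fun x => G.Adj x v)).card : ℝ) := by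
  by_contra hlt
  exact h (Finset.mem_filter.2 ⟨Finset.mem_univ _, not_le.1 hlt⟩)

lemma badSet_bound {p α : ℝ} (hj : IsJumbled G p α) (hp : 0 < p) (X : Finset V) :
    p^2 * X.card * ((badSet G p X).card : ℝ) ≤ 4*α^2 := by
  set B := badSet G p X with hBdef
  rcases Finset.eq_empty_or_nonempty B with hB | hB
  · rw [hB]; simp; positivity
  · have he : ((G.interedges X B).card : ℝ) < p/2 * X.card * B.card := by
      have h1 : ((G.interedges X B).card : ℝ) = ∑ b ∈ B, ((X.filter (fun x => G.Adj x b)).card : ℝ) := by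
        rw [card_interedges_eq_sum]; push_cast; ring_nf
      rw [h1]
      have h2 : ∑ b ∈ B, ((X.filter (fun x => G.Adj x b)).card : ℝ) <
          ∑ _b ∈ B, p/2 * X.card := by
        refine Finset.sum_lt_sum_of_nonempty hB ?_
        intro b hb
        exact (Finset.mem_filter.1 hb).2
      rw [Finset.sum_const, nsmul_eq_mul] at h2
      calc _ < (B.card : ℝ) * (p/2 * X.card) := h2
        _ = p/2 * X.card * B.card := by ring
    have hj' := hj X B
    set s := Real.sqrt ((X.card : ℝ) * B.card) with hs
    have hs2 : s^2 = (X.card : ℝ) * B.card := Real.sq_sqrt (by positivity)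
    have hs0 : 0 ≤ s := Real.sqrt_nonneg _
    have hlow : p * X.card * B.card - α * s ≤ ((G.interedges X B).card : ℝ) := by
      have := (abs_le.1 hj').1
      linarith
    have h1 : p/2 * s^2 < α * s := by rw [hs2]; nlinarith
    nlinarith [sq_nonneg (p*s - 2*α), mul_lt_mul_of_pos_left h1 hp, hs2]

lemma bad_card_le {p α : ℝ} (hj : IsJumbled G p α) (hp : 0 < p) {X : Finset V}
    {m bound : ℝ} (hm : 0 < m) (hX : m ≤ X.card) (hb : 4*α^2 ≤ p^2 * m * bound) :
    ((badSet G p X).card : ℝ) ≤ bound := by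
  have h := badSet_bound G hj hp X
  have hB0 : (0:ℝ) ≤ ((badSet G p X).card : ℝ) := Nat.cast_nonneg _
  have h2 : p^2*m*((badSet G p X).card : ℝ) ≤ p^2*m*bound := by
    nlinarith [mul_nonneg (mul_nonneg (sq_nonneg p) (sub_nonneg.2 hX)) hB0]
  exact le_of_mul_le_mul_left h2 (by positivity)

lemma pick {S T : Finset V} (h : (T.card:ℝ) < S.card) : ∃ v, v ∈ S ∧ v ∉ T := by
  have h' : T.card < S.card := by exact_mod_cast h
  have h2 : 0 < (S \ T).card :=
    lt_of_lt_of_le (Nat.sub_pos_of_lt h') (Finset.le_card_sdiff T S)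
  obtain ⟨v, hv⟩ := Finset.card_pos.1 h2
  exact ⟨v, (Finset.mem_sdiff.1 hv).1, (Finset.mem_sdiff.1 hv).2⟩

lemma pick3 {S T₁ T₂ T₃ : Finset V} (h : (T₁.card:ℝ) + T₂.card + T₃.card < S.card) :
    ∃ v, v ∈ S ∧ v ∉ T₁ ∧ v ∉ T₂ ∧ v ∉ T₃ := by
  have hU : ((T₁ ∪ T₂ ∪ T₃).card : ℝ) ≤ (T₁.card:ℝ) + T₂.card + T₃.card := by
    have : (T₁ ∪ T₂ ∪ T₃).card ≤ T₁.card + T₂.card + T₃.card :=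
      (Finset.card_union_le _ _).trans
        (Nat.add_le_add_right (Finset.card_union_le _ _) _)
    exact_mod_cast this
  obtain ⟨v, hvS, hvT⟩ := pick (lt_of_le_of_lt hU h)
  simp only [Finset.mem_union, not_or] at hvT
  exact ⟨v, hvS, hvT.1.1, hvT.1.2, hvT.2⟩

lemma pick4 {S T₁ T₂ T₃ T₄ : Finset V}
    (h : (T₁.card:ℝ) + T₂.card + T₃.card + T₄.card < S.card) :
    ∃ v, v ∈ S ∧ v ∉ T₁ ∧ v ∉ T₂ ∧ v ∉ T₃ ∧ v ∉ T₄ := by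
  have hU : ((T₁ ∪ T₂ ∪ T₃ ∪ T₄).card : ℝ) ≤ (T₁.card:ℝ) + T₂.card + T₃.card + T₄.card := by
    have : (T₁ ∪ T₂ ∪ T₃ ∪ T₄).card ≤ T₁.card + T₂.card + T₃.card + T₄.card :=
      (Finset.card_union_le _ _).trans
        (Nat.add_le_add_right ((Finset.card_union_le _ _).trans
          (Nat.add_le_add_right (Finset.card_union_le _ _) _)) _)
    exact_mod_cast this
  obtain ⟨v, hvS, hvT⟩ := pick (lt_of_le_of_lt hU h)
  simp only [Finset.mem_union, not_or] at hvT
  exact ⟨v, hvS, hvT.1.1.1, hvT.1.1.2, hvT.1.2, hvT.2⟩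

lemma card_le_succ {s : Finset V} {k : ℕ} (h : s.card ≤ k) (x : V) :
    (insert x s).card ≤ k+1 := (Finset.card_insert_le _ _).trans (by omega)

end Bad


section NumLemmas
variable {p n α : ℝ}

lemma nl_pre1 (hE' : α*α ≤ (p^2*n/200)*(p^2*n/200)) : 4*α^2 ≤ p^4*n^2/10000 := by nlinarith
lemma nl_hb0 (hE : 4*α^2 ≤ p^4*n^2/10000) : 4*α^2 ≤ p^2*n*(p^2*n/10000) := by nlinarith
lemma nl_hb1 (hE : 4*α^2 ≤ p^4*n^2/10000) : 4*α^2 ≤ p^2*(p*n/2)*(p*n/5000) := by nlinarith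
lemma nl_hb2 (hE : 4*α^2 ≤ p^4*n^2/10000) : 4*α^2 ≤ p^2*(p^2*n/4)*(n/2500) := by nlinarith

lemma nl_step1 {B : ℝ} (hB : B ≤ p^2*n/10000) (h1 : p^2*n ≤ p*n) (h2 : p*n ≤ n)
    (hn : (1000000:ℝ) ≤ n) : B < n := by linarith
lemma nl_step2 {B N : ℝ} (hB : B ≤ p^2*n/10000) (hN : p/2*n ≤ N) (h1 : p^2*n ≤ p*n)
    (h2 : (1000:ℝ) < p*n) : B < N := by linarith
lemma nl_step3 {B0 B1 B2 P4 : ℝ} (h0 : B0 ≤ p^2*n/10000) (h1 : B1 ≤ p*n/5000)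
    (h2 : B2 ≤ p*n/5000) (hP : P4 ≤ 2) (ha : p^2*n ≤ p*n) (hb : p*n ≤ n)
    (hn : (1000000:ℝ) ≤ n) : B0 + B1 + B2 + P4 < n := by linarith
lemma nl_step4 {B1 B2 P4 N : ℝ} (h1 : B1 ≤ p*n/5000) (h2 : B2 ≤ p*n/5000) (hP : P4 ≤ 2)
    (hN : p/2*n ≤ N) (hpn : (1000:ℝ) < p*n) : B1 + B2 + P4 + 0 < N := by linarith
lemma nl_qc {B1 B2 P4 Q : ℝ} (hQ : Q ≤ B1 + B2 + P4) (h1 : B1 ≤ n/2500) (h2 : B2 ≤ n/2500)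
    (hP : P4 ≤ 4) (hn : (1000000:ℝ) ≤ n) : Q ≤ n/1000 := by linarith
lemma nl_lvl1 {N X : ℝ} (hgood : p/2 * N ≤ X) (hN : p/2*n ≤ N) (hp : 0 < p) :
    p^2*n/4 ≤ X := by nlinarith [mul_nonneg hp.le (sub_nonneg.2 hN)]
lemma nl_lvl2 {X2 Y : ℝ} (hgood : p/2 * X2 ≤ Y) (hX2 : p^2*n/4 ≤ X2) (hp : 0 < p) :
    p^3*n/8 ≤ Y := by nlinarith [mul_nonneg hp.le (sub_nonneg.2 hX2)]
lemma nl_sq {A B : ℝ} (hA : A ≤ n) (hB : B ≤ n) (hA0 : 0 ≤ A) (hB0 : 0 ≤ B) :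
    A*B ≤ n^2 := by nlinarith
lemma nl_edge {E A B s : ℝ} (hjl : p*A*B - α*s ≤ E) (hs : s ≤ n) (hs0 : 0 ≤ s)
    (hA : n - n/1000 ≤ A) (hB : n - n/1000 ≤ B) (hα : α ≤ p*n/200) (hα0 : 0 ≤ α)
    (hp : 0 < p) (hn : 0 < n) : 0 < E := by
  have hm : (0:ℝ) ≤ n - n/1000 := by linarith
  have hprod : (n - n/1000) * (n - n/1000) ≤ A * B := by
    nlinarith [mul_nonneg (sub_nonneg.2 hA) (sub_nonneg.2 hB)]
  have hplow : p * ((n - n/1000)*(n-n/1000)) ≤ p * (A*B) :=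
    mul_le_mul_of_nonneg_left hprod hp.le
  have hαs : α * s ≤ (p*n/200)*n := by nlinarith
  nlinarith [mul_pos (mul_pos hp hn) hn]
lemma nl_pickY {T Y : ℝ} (hT : T ≤ 9) (hY : p^3*n/8 ≤ Y) (h3 : (1000:ℝ) < p^3*n) :
    T < Y := by linarith

end NumLemmas

set_option maxHeartbeats 2000000 in
theorem stmt_2 :
    ∃ n₀ : ℕ, ∀ (V : Type) [Fintype V] [DecidableEq V]
      (G : SimpleGraph V) [DecidableRel G.Adj] (p α : ℝ),
      0 ≤ p → p ≤ 1 → 0 ≤ α → n₀ ≤ Fintype.card V →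
      IsJumbled G p α →
      α ≤ p ^ 2 * (Fintype.card V : ℝ) / 200 →
      10 * (Fintype.card V : ℝ) ^ (-(1 / 3) : ℝ) < p →
      ContainsCopy petersen G := by
  use 1000000
  intro V _ _ G _ p α hp0' hp1 hα0 hncard hj hαb hpl
  set n : ℝ := (Fintype.card V : ℝ) with hndef
  have hn6 : (1000000:ℝ) ≤ n := by rw [hndef]; exact_mod_cast hncard
  have hnpos : (0:ℝ) < n := by linarith only [hn6]
  have ht0 : (0:ℝ) < n ^ (-(1/3):ℝ) := Real.rpow_pos_of_pos hnpos _
  have hp0 : 0 < p := lt_trans (by nlinarith [ht0]) hpl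
  have hcube : (n ^ (-(1/3):ℝ))^(3:ℕ) = n⁻¹ := by
    rw [← Real.rpow_natCast (n ^ (-(1/3):ℝ)) 3, ← Real.rpow_mul hnpos.le]
    norm_num [Real.rpow_neg_one]
  have h3 : (1000:ℝ) < p^3*n := by
    have hlt : (10 * n^(-(1/3):ℝ))^(3:ℕ) < p^(3:ℕ) :=
      pow_lt_pow_left₀ hpl (by nlinarith [ht0]) (by norm_num)
    have hexp : (10 * n^(-(1/3):ℝ))^(3:ℕ) = 1000 * n⁻¹ := by
      rw [mul_pow, hcube]; norm_num
    rw [hexp] at hlt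
    have hinv : n⁻¹ * n = 1 := inv_mul_cancel₀ hnpos.ne'
    nlinarith [hlt, hnpos, hinv]
  have hsq1 : p^2 ≤ 1 := by nlinarith [hp1, hp0.le]
  have hpn : (1000:ℝ) < p*n := by
    nlinarith [h3, mul_nonneg (mul_nonneg hp0.le hnpos.le) (sub_nonneg.2 hsq1)]
  have hp2n : (1000:ℝ) < p^2*n := by
    nlinarith [h3, mul_nonneg (mul_nonneg (mul_nonneg hp0.le hp0.le) hnpos.le)
      (sub_nonneg.2 hp1)]
  have hq200 : (0:ℝ) ≤ p^2*n/200 := by nlinarith [mul_nonneg (sq_nonneg p) hnpos.le]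
  have hE : 4*α^2 ≤ p^4*n^2/10000 := nl_pre1 (mul_le_mul hαb hαb hα0 hq200)
  have hαpn : α ≤ p*n/200 := by
    nlinarith [hαb, mul_nonneg (mul_nonneg hp0.le hnpos.le) (sub_nonneg.2 hp1)]
  have hcu : (((Finset.univ : Finset V)).card : ℝ) = n := by
    rw [Finset.card_univ]
  have hXle : ∀ X : Finset V, (X.card:ℝ) ≤ n := fun X => by
    rw [← hcu]; exact_mod_cast Finset.card_le_univ X
  have hpn_n : p*n ≤ n := by nlinarith [mul_nonneg hnpos.le (sub_nonneg.2 hp1)]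
  have hp2n_pn : p^2*n ≤ p*n := by
    nlinarith [mul_nonneg (mul_nonneg hp0.le hnpos.le) (sub_nonneg.2 hp1)]
  -- step 1 : choose a
  have hB0 : ((badSet G p (Finset.univ : Finset V)).card : ℝ) ≤ p^2*n/10000 :=
    bad_card_le G hj hp0 hnpos (le_of_eq hcu.symm) (nl_hb0 hE)
  obtain ⟨a, -, haB⟩ := pick (S := (Finset.univ : Finset V)) (T := badSet G p Finset.univ)
    (by rw [hcu]; exact nl_step1 hB0 hp2n_pn hpn_n hn6)
  have hNa : p/2 * n ≤ ((Finset.univ.filter (fun x => G.Adj x a)).card : ℝ) := by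
    have := good_of_not_bad G haB; rwa [hcu] at this
  set Na := Finset.univ.filter (fun x => G.Adj x a) with hNadef
  -- step 2 : choose a'
  obtain ⟨a', ha'Na, ha'B⟩ := pick (S := Na) (T := badSet G p Finset.univ)
    (nl_step2 hB0 hNa hp2n_pn hpn)
  have hAa' : G.Adj a' a := by
    rw [hNadef] at ha'Na; exact (Finset.mem_filter.1 ha'Na).2
  have hNa' : p/2 * n ≤ ((Finset.univ.filter (fun x => G.Adj x a')).card : ℝ) := by
    have := good_of_not_bad G ha'B; rwa [hcu] at this
  set Na' := Finset.univ.filter (fun x => G.Adj x a') with hNa'def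
  have hmNa : (0:ℝ) < p*n/2 := by linarith only [hpn]
  have hBNa : ((badSet G p Na).card : ℝ) ≤ p*n/5000 :=
    bad_card_le G hj hp0 hmNa (by linarith only [hNa]) (nl_hb1 hE)
  have hBNa' : ((badSet G p Na').card : ℝ) ≤ p*n/5000 :=
    bad_card_le G hj hp0 hmNa (by linarith only [hNa']) (nl_hb1 hE)
  -- step 3 : choose b
  have hpair : (({a,a'} : Finset V).card : ℝ) ≤ 2 := by
    exact_mod_cast card_le_succ (by simp : ({a'} : Finset V).card ≤ 1) a
  obtain ⟨b, -, hbB0, hbBNa, hbBNa', hbne⟩ := pick4 (S := (Finset.univ : Finset V))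
    (T₁ := badSet G p Finset.univ) (T₂ := badSet G p Na) (T₃ := badSet G p Na')
    (T₄ := {a,a'})
    (by rw [hcu]; exact nl_step3 hB0 hBNa hBNa' hpair hp2n_pn hpn_n hn6)
  have hbna : b ≠ a ∧ b ≠ a' := by
    simpa [Finset.mem_insert, Finset.mem_singleton, not_or] using hbne
  have hNb : p/2 * n ≤ ((Finset.univ.filter (fun x => G.Adj x b)).card : ℝ) := by
    have := good_of_not_bad G hbB0; rwa [hcu] at this
  set Nb := Finset.univ.filter (fun x => G.Adj x b) with hNbdef
  have hX15 : p^2*n/4 ≤ ((Na.filter (fun x => G.Adj x b)).card : ℝ) :=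
    nl_lvl1 (good_of_not_bad G hbBNa) hNa hp0
  have hX13 : p^2*n/4 ≤ ((Na'.filter (fun x => G.Adj x b)).card : ℝ) :=
    nl_lvl1 (good_of_not_bad G hbBNa') hNa' hp0
  set X15 := Na.filter (fun x => G.Adj x b) with hX15def
  set X13 := Na'.filter (fun x => G.Adj x b) with hX13def
  -- step 4 : choose b'
  obtain ⟨b', hb'Nb, hb'BNa, hb'BNa', hb'ne⟩ := pick4 (S := Nb)
    (T₁ := badSet G p Na) (T₂ := badSet G p Na') (T₃ := {a,a'}) (T₄ := ∅)
    (by simp only [Finset.card_empty, Nat.cast_zero]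
        exact nl_step4 hBNa hBNa' hpair hNb hpn)
  have hAb' : G.Adj b' b := by
    rw [hNbdef] at hb'Nb; exact (Finset.mem_filter.1 hb'Nb).2
  have hb'na : b' ≠ a ∧ b' ≠ a' := by
    simpa [Finset.mem_insert, Finset.mem_singleton, not_or] using hb'ne
  have hX12 : p^2*n/4 ≤ ((Na'.filter (fun x => G.Adj x b')).card : ℝ) :=
    nl_lvl1 (good_of_not_bad G hb'BNa') hNa' hp0
  have hX14 : p^2*n/4 ≤ ((Na.filter (fun x => G.Adj x b')).card : ℝ) :=
    nl_lvl1 (good_of_not_bad G hb'BNa) hNa hp0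
  set X12 := Na'.filter (fun x => G.Adj x b') with hX12def
  set X14 := Na.filter (fun x => G.Adj x b') with hX14def
  -- level-2 bad set bounds
  have hm2 : (0:ℝ) < p^2*n/4 := by linarith only [hp2n]
  have hB12 : ((badSet G p X12).card : ℝ) ≤ n/2500 :=
    bad_card_le G hj hp0 hm2 hX12 (nl_hb2 hE)
  have hB13 : ((badSet G p X13).card : ℝ) ≤ n/2500 :=
    bad_card_le G hj hp0 hm2 hX13 (nl_hb2 hE)
  have hB14 : ((badSet G p X14).card : ℝ) ≤ n/2500 :=
    bad_card_le G hj hp0 hm2 hX14 (nl_hb2 hE)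
  have hB15 : ((badSet G p X15).card : ℝ) ≤ n/2500 :=
    bad_card_le G hj hp0 hm2 hX15 (nl_hb2 hE)
  -- step 5 : choose the edge (c, c')
  have hfour : (({a,a',b,b'} : Finset V).card : ℝ) ≤ 4 := by
    exact_mod_cast card_le_succ (card_le_succ (card_le_succ
      (by simp : ({b'} : Finset V).card ≤ 1) b) a') a
  set Qc : Finset V := badSet G p X13 ∪ badSet G p X14 ∪ {a,a',b,b'} with hQcdef
  set Qc' : Finset V := badSet G p X12 ∪ badSet G p X15 ∪ {a,a',b,b'} with hQc'def
  have hQcle : (Qc.card : ℝ) ≤ n/1000 := by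
    have h1 : Qc.card ≤ ((badSet G p X13) ∪ (badSet G p X14)).card
        + ({a,a',b,b'} : Finset V).card := Finset.card_union_le _ _
    have h2 : ((badSet G p X13) ∪ (badSet G p X14)).card
        ≤ (badSet G p X13).card + (badSet G p X14).card := Finset.card_union_le _ _
    have h1' : (Qc.card : ℝ) ≤ ((badSet G p X13).card:ℝ) + ((badSet G p X14).card:ℝ)
        + (({a,a',b,b'} : Finset V).card:ℝ) := by
      have := h1.trans (Nat.add_le_add_right h2 _)
      exact_mod_cast this
    exact nl_qc h1' hB13 hB14 hfour hn6
  have hQc'le : (Qc'.card : ℝ) ≤ n/1000 := by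
    have h1 : Qc'.card ≤ ((badSet G p X12) ∪ (badSet G p X15)).card
        + ({a,a',b,b'} : Finset V).card := Finset.card_union_le _ _
    have h2 : ((badSet G p X12) ∪ (badSet G p X15)).card
        ≤ (badSet G p X12).card + (badSet G p X15).card := Finset.card_union_le _ _
    have h1' : (Qc'.card : ℝ) ≤ ((badSet G p X12).card:ℝ) + ((badSet G p X15).card:ℝ)
        + (({a,a',b,b'} : Finset V).card:ℝ) := by
      have := h1.trans (Nat.add_le_add_right h2 _)
      exact_mod_cast this
    exact nl_qc h1' hB12 hB15 hfour hn6
  set Xc := Finset.univ \ Qc with hXcdef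
  set Xc' := Finset.univ \ Qc' with hXc'def
  have hXc : n - n/1000 ≤ (Xc.card : ℝ) := by
    have hsub := Finset.card_sdiff_of_subset (Finset.subset_univ Qc)
    have h2 : (Xc.card : ℝ) = (((Finset.univ : Finset V)).card : ℝ) - Qc.card := by
      rw [hXcdef, hsub, Nat.cast_sub (Finset.card_le_card (Finset.subset_univ Qc))]
    rw [h2, hcu]; linarith only [hQcle]
  have hXc' : n - n/1000 ≤ (Xc'.card : ℝ) := by
    have hsub := Finset.card_sdiff_of_subset (Finset.subset_univ Qc')
    have h2 : (Xc'.card : ℝ) = (((Finset.univ : Finset V)).card : ℝ) - Qc'.card := by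
      rw [hXc'def, hsub, Nat.cast_sub (Finset.card_le_card (Finset.subset_univ Qc'))]
    rw [h2, hcu]; linarith only [hQc'le]
  have hedge : (0:ℝ) < ((G.interedges Xc Xc').card : ℝ) := by
    have hjl := (abs_le.1 (hj Xc Xc')).1
    have hjl' : p * (Xc.card:ℝ) * (Xc'.card:ℝ)
        - α * Real.sqrt ((Xc.card:ℝ) * (Xc'.card:ℝ)) ≤ ((G.interedges Xc Xc').card : ℝ) := by
      linarith only [hjl]
    have hsle : Real.sqrt ((Xc.card:ℝ) * (Xc'.card:ℝ)) ≤ n := by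
      calc Real.sqrt ((Xc.card:ℝ) * (Xc'.card:ℝ)) ≤ Real.sqrt (n^2) :=
            Real.sqrt_le_sqrt (nl_sq (hXle Xc) (hXle Xc') (Nat.cast_nonneg _) (Nat.cast_nonneg _))
        _ = n := Real.sqrt_sq hnpos.le
    exact nl_edge hjl' hsle (Real.sqrt_nonneg _) hXc hXc' hαpn hα0 hp0 hnpos
  have hedge' : 0 < (G.interedges Xc Xc').card := by exact_mod_cast hedge
  obtain ⟨⟨c, c'⟩, hcc⟩ := Finset.card_pos.1 hedge'
  rw [SimpleGraph.mem_interedges_iff] at hcc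
  obtain ⟨hcXc, hc'Xc', hAcc'⟩ := hcc
  rw [hXcdef, Finset.mem_sdiff, hQcdef] at hcXc
  have hcQ := hcXc.2
  simp only [Finset.mem_union, not_or] at hcQ
  obtain ⟨⟨hcB13, hcB14⟩, hcfour⟩ := hcQ
  have hcne : c ≠ a ∧ c ≠ a' ∧ c ≠ b ∧ c ≠ b' := by
    simpa [Finset.mem_insert, Finset.mem_singleton, not_or] using hcfour
  rw [hXc'def, Finset.mem_sdiff, hQc'def] at hc'Xc'
  have hc'Q := hc'Xc'.2
  simp only [Finset.mem_union, not_or] at hc'Q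
  obtain ⟨⟨hc'B12, hc'B15⟩, hc'four⟩ := hc'Q
  have hc'ne : c' ≠ a ∧ c' ≠ a' ∧ c' ≠ b ∧ c' ≠ b' := by
    simpa [Finset.mem_insert, Finset.mem_singleton, not_or] using hc'four
  -- level-3 candidate sets
  have hY12 : p^3*n/8 ≤ ((X12.filter (fun x => G.Adj x c')).card : ℝ) :=
    nl_lvl2 (good_of_not_bad G hc'B12) hX12 hp0
  have hY13 : p^3*n/8 ≤ ((X13.filter (fun x => G.Adj x c)).card : ℝ) :=
    nl_lvl2 (good_of_not_bad G hcB13) hX13 hp0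
  have hY14 : p^3*n/8 ≤ ((X14.filter (fun x => G.Adj x c)).card : ℝ) :=
    nl_lvl2 (good_of_not_bad G hcB14) hX14 hp0
  have hY15 : p^3*n/8 ≤ ((X15.filter (fun x => G.Adj x c')).card : ℝ) :=
    nl_lvl2 (good_of_not_bad G hc'B15) hX15 hp0
  set Y12 := X12.filter (fun x => G.Adj x c') with hY12def
  set Y13 := X13.filter (fun x => G.Adj x c) with hY13def
  set Y14 := X14.filter (fun x => G.Adj x c) with hY14def
  set Y15 := X15.filter (fun x => G.Adj x c') with hY15def
  -- choose the four independent vertices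
  have hsix : (({a,a',b,b',c,c'} : Finset V).card : ℝ) ≤ 6 := by
    exact_mod_cast card_le_succ (card_le_succ (card_le_succ (card_le_succ (card_le_succ
      (by simp : ({c'} : Finset V).card ≤ 1) c) b') b) a') a
  obtain ⟨x6, hx6Y, hx6ne⟩ := pick (S := Y12) (T := {a,a',b,b',c,c'})
    (nl_pickY (by linarith only [hsix]) hY12 h3)
  have hx6ne' : x6 ≠ a ∧ x6 ≠ a' ∧ x6 ≠ b ∧ x6 ≠ b' ∧ x6 ≠ c ∧ x6 ≠ c' := by
    simpa [Finset.mem_insert, Finset.mem_singleton, not_or] using hx6ne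
  have hseven : (({a,a',b,b',c,c',x6} : Finset V).card : ℝ) ≤ 7 := by
    exact_mod_cast card_le_succ (card_le_succ (card_le_succ (card_le_succ (card_le_succ
      (card_le_succ (by simp : ({x6} : Finset V).card ≤ 1) c') c) b') b) a') a
  obtain ⟨x7, hx7Y, hx7ne⟩ := pick (S := Y13) (T := {a,a',b,b',c,c',x6})
    (nl_pickY (by linarith only [hseven]) hY13 h3)
  have hx7ne' : x7 ≠ a ∧ x7 ≠ a' ∧ x7 ≠ b ∧ x7 ≠ b' ∧ x7 ≠ c ∧ x7 ≠ c' ∧ x7 ≠ x6 := by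
    simpa [Finset.mem_insert, Finset.mem_singleton, not_or] using hx7ne
  have height : (({a,a',b,b',c,c',x6,x7} : Finset V).card : ℝ) ≤ 8 := by
    exact_mod_cast card_le_succ (card_le_succ (card_le_succ (card_le_succ (card_le_succ
      (card_le_succ (card_le_succ (by simp : ({x7} : Finset V).card ≤ 1) x6) c') c) b') b) a') a
  obtain ⟨x8, hx8Y, hx8ne⟩ := pick (S := Y14) (T := {a,a',b,b',c,c',x6,x7})
    (nl_pickY (by linarith only [height]) hY14 h3)
  have hx8ne' : x8 ≠ a ∧ x8 ≠ a' ∧ x8 ≠ b ∧ x8 ≠ b' ∧ x8 ≠ c ∧ x8 ≠ c' ∧ x8 ≠ x6 ∧ x8 ≠ x7 := by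
    simpa [Finset.mem_insert, Finset.mem_singleton, not_or] using hx8ne
  have hnine : (({a,a',b,b',c,c',x6,x7,x8} : Finset V).card : ℝ) ≤ 9 := by
    exact_mod_cast card_le_succ (card_le_succ (card_le_succ (card_le_succ (card_le_succ
      (card_le_succ (card_le_succ (card_le_succ
        (by simp : ({x8} : Finset V).card ≤ 1) x7) x6) c') c) b') b) a') a
  obtain ⟨x9, hx9Y, hx9ne⟩ := pick (S := Y15) (T := {a,a',b,b',c,c',x6,x7,x8})
    (nl_pickY (by linarith only [hnine]) hY15 h3)
  have hx9ne' : x9 ≠ a ∧ x9 ≠ a' ∧ x9 ≠ b ∧ x9 ≠ b' ∧ x9 ≠ c ∧ x9 ≠ c' ∧ x9 ≠ x6 ∧ x9 ≠ x7 ∧ x9 ≠ x8 := by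
    simpa [Finset.mem_insert, Finset.mem_singleton, not_or] using hx9ne
  -- unpack adjacencies
  rw [hY12def, Finset.mem_filter, hX12def, Finset.mem_filter, hNa'def, Finset.mem_filter] at hx6Y
  obtain ⟨⟨⟨-, h6a'⟩, h6b'⟩, h6c'⟩ := hx6Y
  rw [hY13def, Finset.mem_filter, hX13def, Finset.mem_filter, hNa'def, Finset.mem_filter] at hx7Y
  obtain ⟨⟨⟨-, h7a'⟩, h7b⟩, h7c⟩ := hx7Y
  rw [hY14def, Finset.mem_filter, hX14def, Finset.mem_filter, hNadef, Finset.mem_filter] at hx8Y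
  obtain ⟨⟨⟨-, h8a⟩, h8b'⟩, h8c⟩ := hx8Y
  rw [hY15def, Finset.mem_filter, hX15def, Finset.mem_filter, hNadef, Finset.mem_filter] at hx9Y
  obtain ⟨⟨⟨-, h9a⟩, h9b⟩, h9c'⟩ := hx9Y
  -- assemble
  exact containsCopy_of_verts G a a' b b' c c' x6 x7 x8 x9
    hAa'.ne.symm hbna.1.symm hb'na.1.symm hcne.1.symm hc'ne.1.symm
    hx6ne'.1.symm hx7ne'.1.symm hx8ne'.1.symm hx9ne'.1.symm
    hbna.2.symm hb'na.2.symm hcne.2.1.symm hc'ne.2.1.symm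
    hx6ne'.2.1.symm hx7ne'.2.1.symm hx8ne'.2.1.symm hx9ne'.2.1.symm
    hAb'.ne.symm hcne.2.2.1.symm hc'ne.2.2.1.symm
    hx6ne'.2.2.1.symm hx7ne'.2.2.1.symm hx8ne'.2.2.1.symm hx9ne'.2.2.1.symm
    hcne.2.2.2.symm hc'ne.2.2.2.symm
    hx6ne'.2.2.2.1.symm hx7ne'.2.2.2.1.symm hx8ne'.2.2.2.1.symm hx9ne'.2.2.2.1.symm
    hAcc'.ne
    hx6ne'.2.2.2.2.1.symm hx7ne'.2.2.2.2.1.symm hx8ne'.2.2.2.2.1.symm hx9ne'.2.2.2.2.1.symm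
    hx6ne'.2.2.2.2.2.symm hx7ne'.2.2.2.2.2.1.symm hx8ne'.2.2.2.2.2.1.symm hx9ne'.2.2.2.2.2.1.symm
    hx7ne'.2.2.2.2.2.2.symm hx8ne'.2.2.2.2.2.2.1.symm hx9ne'.2.2.2.2.2.2.1.symm
    hx8ne'.2.2.2.2.2.2.2.symm hx9ne'.2.2.2.2.2.2.2.1.symm
    hx9ne'.2.2.2.2.2.2.2.2.symm
    hAa'.symm hAb'.symm hAcc'
    h6a' h6b' h6c' h7a' h7b h7c h8a h8b' h8c h9a h9b h9c'
end

section
/- Let T be a forest on the vertex set {1,…,m}, let p ∈ (0,1], α ≥ 0, and let G be a (p,α)-jumbled graph on n vertices. Let X₁, …, X_m ⊆ V(G) be nonempty pairwise disjoint subsets such that |X_i|·|X_j| ≥ 2^m·(α/p)² for every edge ij of T. Then there exists an embedding f of T into G (an injective map from {1,…,m} to V(G) sending every edge of T to an edge of G) such that f(i) ∈ X_i for every i ∈ {1,…,m}. -/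
open Finset SimpleGraph

/-- In a forest, every nonempty finite set `S` of vertices contains a vertex with at most
one neighbor in `S`. -/
lemma forest_exists_leaf {m : ℕ} (T : SimpleGraph (Fin m)) (hT : T.IsAcyclic)
    (S : Finset (Fin m)) (hS : S.Nonempty) :
    ∃ ℓ ∈ S, ∀ x ∈ S, T.Adj ℓ x → ∀ y ∈ S, T.Adj ℓ y → x = y := by
  classical
  set P : ℕ → Prop := fun jj => ∃ (v w : Fin m) (q : T.Walk v w),
    q.IsPath ∧ (∀ z ∈ q.support, z ∈ S) ∧ q.length = jj with hP_def
  obtain ⟨u, huS⟩ := hS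
  have hP0 : P 0 := ⟨u, u, Walk.nil, Walk.IsPath.nil, by simp [huS], rfl⟩
  have hbd : ∀ jj, P jj → jj ≤ m := by
    rintro jj ⟨v, w, q, hq, -, rfl⟩
    have h1 : q.support.length ≤ m := by
      simpa [Fintype.card_fin] using hq.support_nodup.length_le_card
    rw [Walk.length_support] at h1
    omega
  set k := Nat.findGreatest P m with hk_def
  have hPk : P k := Nat.findGreatest_spec (Nat.zero_le m) hP0
  have hmax : ∀ j, P j → j ≤ k := by
    intro j hj
    by_contra h
    exact Nat.findGreatest_is_greatest (by omega) (hbd j hj) hj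
  obtain ⟨v, w, q, hq, hsub, hlen⟩ := hPk
  have hr : q.reverse.IsPath := hq.reverse
  have hrsub : ∀ z ∈ q.reverse.support, z ∈ S := by
    intro z hz
    apply hsub
    rwa [Walk.support_reverse, List.mem_reverse] at hz
  have hrlen : q.reverse.length = k := by rw [Walk.length_reverse]; exact hlen
  set r := q.reverse with hr_def
  clear_value r
  clear hq hsub hlen q hr_def
  have hwS : w ∈ S := hrsub w r.start_mem_support
  have hstep1 : ∀ x, x ∈ S → T.Adj w x → x ∈ r.support := by
    intro x hxS hadj
    by_contra hxr
    have hP : P (k + 1) := by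
      refine ⟨x, v, Walk.cons hadj.symm r, ?_, ?_, ?_⟩
      · exact (Walk.cons_isPath_iff _ _).mpr ⟨hr, hxr⟩
      · intro z hz
        rw [Walk.support_cons, List.mem_cons] at hz
        rcases hz with rfl | hz
        · exact hxS
        · exact hrsub z hz
      · simp [Walk.length_cons, hrlen]
    have := hmax _ hP
    omega
  refine ⟨w, hwS, ?_⟩
  clear hrlen
  cases r with
  | nil =>
    intro x hxS hadjx y hyS hadjy
    have hx := hstep1 x hxS hadjx
    simp [Walk.support_nil] at hx
    rw [hx] at hadjx
    exact absurd hadjx (T.loopless.irrefl _)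
  | cons hadj' q' =>
    rename_i y
    have hq' := (Walk.cons_isPath_iff _ _).mp hr
    have key : ∀ x ∈ S, T.Adj w x → x = y := by
      intro x hxS hadj
      by_contra hxy
      have hx_sup : x ∈ (Walk.cons hadj' q').support := hstep1 x hxS hadj
      rw [Walk.support_cons, List.mem_cons] at hx_sup
      rcases hx_sup with rfl | hxq
      · exact hadj.ne rfl
      · have ht : (q'.takeUntil x hxq).IsPath := hq'.1.takeUntil hxq
        have hwt : w ∉ (q'.takeUntil x hxq).support := fun hw' =>
          hq'.2 (q'.support_takeUntil_subset hxq hw')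
        have htc : ((q'.takeUntil x hxq).concat hadj.symm).IsPath := by
          rw [← Walk.isPath_reverse_iff, Walk.reverse_concat]
          rw [Walk.cons_isPath_iff]
          exact ⟨ht.reverse, by rwa [Walk.support_reverse, List.mem_reverse]⟩
        have hedge : s(w, y) ∉ ((q'.takeUntil x hxq).concat hadj.symm).edges := by
          rw [Walk.edges_concat]
          intro hmem
          rcases (by simpa using hmem :
              s(w,y) ∈ (q'.takeUntil x hxq).edges ∨ s(w,y) = s(x,w)) with hmem | hmem
          · exact hwt ((q'.takeUntil x hxq).fst_mem_support_of_mem_edges hmem)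
          · rw [Sym2.eq_iff] at hmem
            rcases hmem with ⟨h1, -⟩ | ⟨-, h2⟩
            · exact hadj.ne h1
            · exact hxy h2.symm
        exact hT _ ((Walk.cons_isCycle_iff _ hadj').mpr ⟨htc, hedge⟩)
    intro x hxS hax y' hy'S hay
    rw [key x hxS hax, key y' hy'S hay]

lemma card_interedges_eq_sum_s4 {V : Type*} [DecidableEq V] (G : SimpleGraph V)
    [DecidableRel G.Adj] (A B : Finset V) :
    (G.interedges A B).card = ∑ a ∈ A, (B.filter (G.Adj a)).card := by
  rw [SimpleGraph.interedges, Rel.interedges_eq_biUnion, Finset.card_biUnion]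
  · exact Finset.sum_congr rfl fun a _ => Finset.card_map _
  · intro x hx y hy hxy
    rw [Function.onFun, Finset.disjoint_left]
    rintro ⟨a, b⟩ hab hab'
    simp only [Finset.mem_map, Function.Embedding.coeFn_mk, Prod.mk.injEq] at hab hab'
    obtain ⟨c, -, rfl, -⟩ := hab
    obtain ⟨c', -, rfl, -⟩ := hab'
    exact hxy rfl

/-- The set of vertices with few neighbours in `B` is small, in a jumbled graph. -/
lemma bad_card {V : Type*} [Fintype V] [DecidableEq V] (G : SimpleGraph V) [DecidableRel G.Adj]
    {p α : ℝ} (hp0 : 0 < p) (hα : 0 ≤ α) (hG : IsJumbled G p α) (B : Finset V)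
    (Bad : Finset V)
    (hBadprop : ∀ v ∈ Bad, 2 * (((B.filter (G.Adj v)).card : ℝ)) < p * B.card)
    (hBadne : Bad.Nonempty) :
    (Bad.card : ℝ) * B.card < 4 * (α / p) ^ 2 := by
  have hB : 0 < (B.card : ℝ) := by
    obtain ⟨v, hv⟩ := hBadne
    have := hBadprop v hv
    have h0 : (0 : ℝ) ≤ ((B.filter (G.Adj v)).card : ℝ) := Nat.cast_nonneg _
    nlinarith
  have hBadc : 0 < (Bad.card : ℝ) := by exact_mod_cast hBadne.card_pos
  have hsum : ((G.interedges Bad B).card : ℝ) = ∑ v ∈ Bad, ((B.filter (G.Adj v)).card : ℝ) := by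
    rw [card_interedges_eq_sum_s4]; push_cast; ring
  have hlt : ((G.interedges Bad B).card : ℝ) < p * Bad.card * B.card / 2 := by
    rw [hsum]
    calc ∑ v ∈ Bad, ((B.filter (G.Adj v)).card : ℝ)
        < ∑ _v ∈ Bad, p * B.card / 2 :=
          Finset.sum_lt_sum_of_nonempty hBadne fun v hv => by linarith [hBadprop v hv]
      _ = Bad.card * (p * B.card / 2) := by rw [Finset.sum_const, nsmul_eq_mul]
      _ = p * Bad.card * B.card / 2 := by ring
  have hj := hG Bad B
  set s := Real.sqrt ((Bad.card : ℝ) * B.card) with hs_def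
  have hspos : 0 < s := Real.sqrt_pos.mpr (by positivity)
  have hs2 : s ^ 2 = (Bad.card : ℝ) * B.card := Real.sq_sqrt (by positivity)
  have h2 : p * Bad.card * B.card - (G.interedges Bad B).card ≤ α * s := by
    have := abs_le.mp hj
    linarith [this.1]
  have hkey : p * s ^ 2 / 2 < α * s := by rw [hs2]; linarith
  have hps : p * s < 2 * α := by nlinarith
  have : p ^ 2 * s ^ 2 < 4 * α ^ 2 := by nlinarith
  rw [← hs2, show (4:ℝ) * (α / p) ^ 2 = 4 * α ^ 2 / p ^ 2 by ring,
    lt_div_iff₀ (by positivity : (0:ℝ) < p ^ 2)]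
  nlinarith

lemma embed_aux {m : ℕ} (T : SimpleGraph (Fin m)) (hT : T.IsAcyclic)
    {V : Type*} [Fintype V] [DecidableEq V] (G : SimpleGraph V) [DecidableRel G.Adj]
    {p α : ℝ} (hp0 : 0 < p) (hα : 0 ≤ α) (hG : IsJumbled G p α) [Nonempty V] :
    ∀ (n : ℕ) (S : Finset (Fin m)) (X : Fin m → Finset V), S.card = n →
    (∀ i ∈ S, (X i).Nonempty) → (∀ i j, i ≠ j → Disjoint (X i) (X j)) →
    (∀ i ∈ S, ∀ j ∈ S, T.Adj i j → (2:ℝ)^n * (α/p)^2 ≤ ((X i).card : ℝ) * (X j).card) →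
    ∃ f : Fin m → V, (∀ i ∈ S, ∀ j ∈ S, T.Adj i j → G.Adj (f i) (f j)) ∧
      (∀ i ∈ S, f i ∈ X i) := by
  intro n
  induction n with
  | zero =>
    intro S X hcard _ _ _
    refine ⟨fun _ => Classical.arbitrary V, ?_, ?_⟩ <;> intro i hi <;>
      simp [Finset.card_eq_zero.mp hcard] at hi
  | succ n ih =>
    intro S X hcard hne hdisj hsize
    classical
    have hS : S.Nonempty := Finset.card_pos.mp (by omega)
    obtain ⟨ℓ, hℓS, hleaf⟩ := forest_exists_leaf T hT S hS
    have hcard' : (S.erase ℓ).card = n := by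
      rw [Finset.card_erase_of_mem hℓS, hcard]
      omega
    have hQ : (0:ℝ) ≤ (α/p)^2 := sq_nonneg _
    have hpow2 : (2:ℝ)^(n+1) = 2 * 2^n := by ring
    by_cases hker : ∃ k ∈ S.erase ℓ, T.Adj ℓ k
    · -- ℓ has a (unique) neighbor k in S
      obtain ⟨k, hkS', hadjℓk⟩ := hker
      have hkS : k ∈ S := S.erase_subset _ hkS'
      have hkℓ : k ≠ ℓ := (Finset.mem_erase.mp hkS').1
      have huniq : ∀ x ∈ S, T.Adj ℓ x → x = k := fun x hx hax => hleaf x hx hax k hkS hadjℓk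
      set Bad := (X k).filter
        (fun v => 2 * (((X ℓ).filter (G.Adj v)).card : ℝ) < p * (X ℓ).card) with hBdef
      have hBadsub : Bad ⊆ X k := Finset.filter_subset _ _
      have hXℓpos : (0:ℝ) < (X ℓ).card := by exact_mod_cast (hne ℓ hℓS).card_pos
      have hXkpos : (0:ℝ) < (X k).card := by exact_mod_cast (hne k hkS).card_pos
      have hsizekℓ := hsize k hkS ℓ hℓS hadjℓk.symm
      have hn1 : 1 ≤ n := by
        have h1 : (S.erase ℓ).Nonempty := ⟨k, hkS'⟩
        have := Finset.card_pos.mpr h1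
        omega
      have h2n1 : (4:ℝ) ≤ 2^(n+1) := by
        calc (4:ℝ) = 2^2 := by norm_num
        _ ≤ 2^(n+1) := pow_le_pow_right₀ (by norm_num) (by omega)
      have hbadlt : Bad.Nonempty → (Bad.card : ℝ) * (X ℓ).card < 4 * (α/p)^2 :=
        fun h => bad_card G hp0 hα hG (X ℓ) Bad
          (fun v hv => (Finset.mem_filter.mp hv).2) h
      have hBadcard : (Bad.card : ℝ) < (X k).card := by
        rcases Bad.eq_empty_or_nonempty with h | h
        · simpa [h] using hXkpos
        · have h1 := hbadlt h
          have h4 : 4 * (α/p)^2 ≤ (X k).card * (X ℓ).card := by nlinarith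
          have h5 : (Bad.card : ℝ) * (X ℓ).card < (X k).card * (X ℓ).card := lt_of_lt_of_le h1 h4
          exact (mul_lt_mul_iff_left₀ hXℓpos).mp h5
      have hcard_sdiff : (((X k) \ Bad).card : ℝ) = (X k).card - Bad.card := by
        rw [Finset.card_sdiff_of_subset hBadsub, Nat.cast_sub (Finset.card_le_card hBadsub)]
      have hX'kne : ((X k) \ Bad).Nonempty := by
        rw [← Finset.card_pos]
        have hc : Bad.card < (X k).card := by exact_mod_cast hBadcard
        rw [Finset.card_sdiff_of_subset hBadsub]; omega
      set X' : Fin m → Finset V := fun i => if i = k then (X k) \ Bad else X i with hX'def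
      have hX'sub : ∀ i, X' i ⊆ X i := by
        intro i
        rw [hX'def]
        dsimp only
        split_ifs with h
        · subst h; exact Finset.sdiff_subset
        · exact Finset.Subset.refl _
      have hX'k : X' k = (X k) \ Bad := by rw [hX'def]; simp
      have hX'ne : ∀ i ∈ S.erase ℓ, (X' i).Nonempty := by
        intro i hi
        rw [hX'def]; dsimp only
        split_ifs with h
        · exact hX'kne
        · exact hne i (S.erase_subset _ hi)
      have key : ∀ j ∈ S.erase ℓ, T.Adj k j →
          (2:ℝ)^n * (α/p)^2 ≤ (((X k) \ Bad).card : ℝ) * (X j).card := by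
        intro j hjS' hadj
        have hjS : j ∈ S := S.erase_subset _ hjS'
        have hjk : j ≠ k := fun h => (T.loopless.irrefl k) (h ▸ hadj)
        have hsizekj := hsize k hkS j hjS hadj
        have hXjpos : (0:ℝ) ≤ (X j).card := Nat.cast_nonneg _
        rcases Bad.eq_empty_or_nonempty with h | h
        · rw [h, Finset.sdiff_empty]
          nlinarith
        · have h1 := hbadlt h
          have hn2 : (8:ℝ) ≤ 2^(n+1) := by
            have hc2 : 2 ≤ n := by
              have hsub2 : ({j, k} : Finset (Fin m)) ⊆ S.erase ℓ := by
                intro z hz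
                rcases Finset.mem_insert.mp hz with rfl | hz
                · exact hjS'
                · rw [Finset.mem_singleton.mp hz]; exact hkS'
              have := Finset.card_le_card hsub2
              rw [Finset.card_pair hjk] at this
              omega
            calc (8:ℝ) = 2^3 := by norm_num
            _ ≤ 2^(n+1) := pow_le_pow_right₀ (by norm_num) (by omega)
          have h8Q : 8 * (α/p)^2 ≤ (X k).card * (X ℓ).card := by nlinarith
          have h2B : 2 * (Bad.card : ℝ) < (X k).card := by
            have h6 : (2*(Bad.card:ℝ)) * (X ℓ).card < (X k).card * (X ℓ).card := by nlinarith
            exact (mul_lt_mul_iff_left₀ hXℓpos).mp h6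
          rw [hcard_sdiff]
          nlinarith [mul_le_mul_of_nonneg_right (le_of_lt h2B) hXjpos]
      have hX'size : ∀ i ∈ S.erase ℓ, ∀ j ∈ S.erase ℓ, T.Adj i j →
          (2:ℝ)^n * (α/p)^2 ≤ ((X' i).card : ℝ) * (X' j).card := by
        intro i hi j hj hadj
        by_cases hik : i = k
        · subst hik
          have hjk : j ≠ i := fun h => (T.loopless.irrefl i) (h ▸ hadj)
          rw [hX'k, hX'def]
          dsimp only
          rw [if_neg hjk]
          exact key j hj hadj
        · by_cases hjk : j = k
          · subst hjk
            have h := key i hi hadj.symm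
            rw [hX'k, hX'def]
            dsimp only
            rw [if_neg hik]
            have h2 : (((X j \ Bad).card : ℝ)) * ((X i).card : ℝ)
                = ((X i).card : ℝ) * (((X j \ Bad).card : ℝ)) := mul_comm _ _
            linarith
          · rw [hX'def]; dsimp only; rw [if_neg hik, if_neg hjk]
            have := hsize i (S.erase_subset _ hi) j (S.erase_subset _ hj) hadj
            nlinarith
      obtain ⟨f', hf'adj, hf'mem⟩ := ih (S.erase ℓ) X' hcard' hX'ne
        (fun i j hij => ((hdisj i j hij).mono (hX'sub i) (hX'sub j))) hX'size
      have hf'k : f' k ∈ (X k) \ Bad := by rw [← hX'k]; exact hf'mem k hkS'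
      have hf'kXk : f' k ∈ X k := (Finset.mem_sdiff.mp hf'k).1
      have hf'knb : f' k ∉ Bad := (Finset.mem_sdiff.mp hf'k).2
      have hgood : p * (X ℓ).card ≤ 2 * (((X ℓ).filter (G.Adj (f' k))).card : ℝ) := by
        by_contra hlt'
        push_neg at hlt'
        exact hf'knb (Finset.mem_filter.mpr ⟨hf'kXk, hlt'⟩)
      have hfilterne : ((X ℓ).filter (G.Adj (f' k))).Nonempty := by
        rw [← Finset.card_pos]
        have hpos : (0:ℝ) < (((X ℓ).filter (G.Adj (f' k))).card : ℝ) := by nlinarith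
        exact_mod_cast hpos
      obtain ⟨v, hv⟩ := hfilterne
      have hvX : v ∈ X ℓ := (Finset.mem_filter.mp hv).1
      have hvadj : G.Adj (f' k) v := (Finset.mem_filter.mp hv).2
      refine ⟨Function.update f' ℓ v, ?_, ?_⟩
      · intro i hi j hj hadj
        by_cases hiℓ : i = ℓ
        · subst hiℓ
          have hjk : j = k := huniq j hj hadj
          subst hjk
          rw [Function.update_self, Function.update_of_ne hkℓ]
          exact hvadj.symm
        · by_cases hjℓ : j = ℓ
          · subst hjℓ
            have hik : i = k := huniq i hi hadj.symm
            subst hik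
            rw [Function.update_self, Function.update_of_ne hkℓ]
            exact hvadj
          · rw [Function.update_of_ne hiℓ, Function.update_of_ne hjℓ]
            exact hf'adj i (Finset.mem_erase.mpr ⟨hiℓ, hi⟩) j (Finset.mem_erase.mpr ⟨hjℓ, hj⟩) hadj
      · intro i hi
        by_cases hiℓ : i = ℓ
        · subst hiℓ
          rw [Function.update_self]
          exact hvX
        · rw [Function.update_of_ne hiℓ]
          exact hX'sub i (hf'mem i (Finset.mem_erase.mpr ⟨hiℓ, hi⟩))
    · -- ℓ has no neighbor in S
      obtain ⟨f', hf'adj, hf'mem⟩ := ih (S.erase ℓ) X hcard'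
        (fun i hi => hne i (S.erase_subset _ hi)) hdisj
        (fun i hi j hj hij => by
          have := hsize i (S.erase_subset _ hi) j (S.erase_subset _ hj) hij
          nlinarith)
      obtain ⟨v, hv⟩ := hne ℓ hℓS
      refine ⟨Function.update f' ℓ v, ?_, ?_⟩
      · intro i hi j hj hadj
        by_cases hiℓ : i = ℓ
        · subst hiℓ
          exact absurd ⟨j, Finset.mem_erase.mpr ⟨fun h => (T.loopless.irrefl i) (h ▸ hadj), hj⟩, hadj⟩ hker
        · by_cases hjℓ : j = ℓ
          · subst hjℓ
            exact absurd ⟨i, Finset.mem_erase.mpr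
              ⟨fun h => (T.loopless.irrefl j) (h ▸ hadj.symm), hi⟩, hadj.symm⟩ hker
          · rw [Function.update_of_ne hiℓ, Function.update_of_ne hjℓ]
            exact hf'adj i (Finset.mem_erase.mpr ⟨hiℓ, hi⟩) j (Finset.mem_erase.mpr ⟨hjℓ, hj⟩) hadj
      · intro i hi
        by_cases hiℓ : i = ℓ
        · subst hiℓ
          rw [Function.update_self]
          exact hv
        · rw [Function.update_of_ne hiℓ]
          exact hf'mem i (Finset.mem_erase.mpr ⟨hiℓ, hi⟩)

theorem stmt_4 (m : ℕ) (T : SimpleGraph (Fin m)) (hT : T.IsAcyclic)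
    {V : Type*} [Fintype V] [DecidableEq V] (G : SimpleGraph V) [DecidableRel G.Adj]
    (p α : ℝ) (hp0 : 0 < p) (hp1 : p ≤ 1) (hα : 0 ≤ α) (hG : IsJumbled G p α)
    (X : Fin m → Finset V) (hne : ∀ i, (X i).Nonempty)
    (hdisj : ∀ i j, i ≠ j → Disjoint (X i) (X j))
    (hsize : ∀ i j, T.Adj i j → (2 : ℝ) ^ m * (α / p) ^ 2 ≤ ((X i).card : ℝ) * (X j).card) :
    ∃ f : Fin m → V, Function.Injective f ∧
      (∀ i j, T.Adj i j → G.Adj (f i) (f j)) ∧ ∀ i, f i ∈ X i := by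
  classical
  cases m with
  | zero =>
    refine ⟨Fin.elim0, ?_, ?_, ?_⟩
    · intro a b _; exact a.elim0
    · intro i; exact i.elim0
    · intro i; exact i.elim0
  | succ m' =>
    haveI : Nonempty V := ⟨(hne 0).choose⟩
    obtain ⟨f, hadj, hmem⟩ := embed_aux T hT G hp0 hα hG (m' + 1) Finset.univ X
      (by simp) (fun i _ => hne i) hdisj
      (fun i _ j _ h => hsize i j h)
    refine ⟨f, ?_, fun i j h => hadj i (Finset.mem_univ i) j (Finset.mem_univ j) h,
      fun i => hmem i (Finset.mem_univ i)⟩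
    intro a b hab
    by_contra hne'
    exact Finset.disjoint_left.mp (hdisj a b hne') (hmem a (Finset.mem_univ a))
      (hab ▸ hmem b (Finset.mem_univ b))
end

section
/- Let p ≠ 3 be a prime and let G be the Cayley graph on H = (ℤ/pℤ)² with connection set S = {(x, x³) : x ∈ ℤ/pℤ, x ≠ 0}, i.e., two vertices u, v ∈ H are adjacent if and only if u − v ∈ S. Then G is triangle-free: there do not exist three pairwise adjacent vertices in G. -/
/-- The Cayley graph on `(ℤ/pℤ)²` with connection set `S = {(x, x³) : x ≠ 0}`:
`u` and `v` are adjacent iff `u - v ∈ S`. -/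
def cayleyCube (p : ℕ) : SimpleGraph (ZMod p × ZMod p) where
  Adj u v := ∃ x : ZMod p, x ≠ 0 ∧ u - v = (x, x ^ 3)
  symm := by
    constructor
    rintro u v ⟨x, hx, h⟩
    refine ⟨-x, neg_ne_zero.mpr hx, ?_⟩
    have h' : v - u = -(u - v) := by ring
    rw [h', h]
    refine Prod.ext ?_ ?_ <;> simp <;> ring
  loopless := by
    constructor
    rintro u ⟨x, hx, h⟩
    rw [sub_self] at h
    exact hx (congrArg Prod.fst h).symm

theorem stmt_8 (p : ℕ) (hp : p.Prime) (hp3 : p ≠ 3) :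
    ¬ ∃ u v w : ZMod p × ZMod p,
      (cayleyCube p).Adj u v ∧ (cayleyCube p).Adj v w ∧ (cayleyCube p).Adj u w := by
  haveI : Fact p.Prime := ⟨hp⟩
  rintro ⟨u, v, w, ⟨x, hx, hxe⟩, ⟨y, hy, hye⟩, ⟨z, hz, hze⟩⟩
  have h1 : z = x + y := by
    have h := congrArg Prod.fst (hxe ▸ hye ▸ hze ▸ (by ring : u - w = (u - v) + (v - w)))
    exact (by simpa using h : z = x + y)
  have h2 : z ^ 3 = x ^ 3 + y ^ 3 := by
    have h := congrArg Prod.snd (hxe ▸ hye ▸ hze ▸ (by ring : u - w = (u - v) + (v - w)))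
    exact (by simpa using h : z ^ 3 = x ^ 3 + y ^ 3)
  rw [h1] at h2
  have h3 : (3 : ZMod p) * (x * (y * (x + y))) = 0 := by linear_combination h2
  have h3ne : (3 : ZMod p) ≠ 0 := by
    intro h
    have h3' : ((3 : ℕ) : ZMod p) = 0 := by exact_mod_cast h
    have hdvd := (ZMod.natCast_eq_zero_iff 3 p).mp h3'
    have := (Nat.prime_dvd_prime_iff_eq hp Nat.prime_three).mp hdvd
    exact hp3 this
  have := mul_eq_zero.mp h3
  rcases this with h | h
  · exact h3ne h
  rcases mul_eq_zero.mp h with h | h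
  · exact hx h
  rcases mul_eq_zero.mp h with h | h
  · exact hy h
  · rw [h1] at hz; exact hz h
end

section
/- Let p ≠ 3 be a prime and let G be the Cayley graph on H = (ℤ/pℤ)² with connection set S = {(x, x³) : x ∈ ℤ/pℤ, x ≠ 0}, i.e., two vertices u, v ∈ H are adjacent if and only if u − v ∈ S. Then G is K_{2,3}-free: every pair of distinct vertices u, v ∈ H has at most two common neighbours in G. -/
/-- Every pair of distinct vertices has at most two common neighbours. -/
theorem stmt_9 (p : ℕ) (hp : p.Prime) (hp3 : p ≠ 3)
    (u v : ZMod p × ZMod p) (huv : u ≠ v) :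
    {w : ZMod p × ZMod p | (cayleyCube p).Adj u w ∧ (cayleyCube p).Adj v w}.ncard ≤ 2 := by
  haveI := Fact.mk hp
  have h3 : (3 : ZMod p) ≠ 0 := by
    intro h
    have hd : p ∣ 3 := by
      have := (ZMod.natCast_eq_zero_iff 3 p).mp (by exact_mod_cast h)
      exact this
    exact hp3 ((Nat.prime_dvd_prime_iff_eq hp Nat.prime_three).mp hd)
  by_contra hcon
  push_neg at hcon
  rw [Set.two_lt_ncard (Set.toFinite _)] at hcon
  obtain ⟨w₁, hw₁, w₂, hw₂, w₃, hw₃, h12, h13, h23⟩ := hcon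
  obtain ⟨⟨x₁, hx₁, hux₁⟩, ⟨y₁, hy₁, hvy₁⟩⟩ := hw₁
  obtain ⟨⟨x₂, hx₂, hux₂⟩, ⟨y₂, hy₂, hvy₂⟩⟩ := hw₂
  obtain ⟨⟨x₃, hx₃, hux₃⟩, ⟨y₃, hy₃, hvy₃⟩⟩ := hw₃
  set a := u.1 - v.1 with ha
  set b := u.2 - v.2 with hb
  have huv' : u - v = (a, b) := rfl
  -- each x satisfies: y = x - a and x³ - (x-a)³ = b
  have key : ∀ (w : ZMod p × ZMod p) (x y : ZMod p),
      u - w = (x, x ^ 3) → v - w = (y, y ^ 3) →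
      y = x - a ∧ x ^ 3 - (x - a) ^ 3 = b := by
    intro w x y hu hv
    have h1 : u - v = (x - y, x ^ 3 - y ^ 3) := by
      have : u - v = (u - w) - (v - w) := by ring
      rw [this, hu, hv]; rfl
    have hfst : a = x - y := congrArg Prod.fst (huv' ▸ h1)
    have hsnd : b = x ^ 3 - y ^ 3 := congrArg Prod.snd (huv' ▸ h1)
    have hy : y = x - a := by rw [hfst]; ring
    exact ⟨hy, by rw [← hy, ← hsnd]⟩
  obtain ⟨hy1, he1⟩ := key w₁ x₁ y₁ hux₁ hvy₁
  obtain ⟨hy2, he2⟩ := key w₂ x₂ y₂ hux₂ hvy₂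
  obtain ⟨hy3, he3⟩ := key w₃ x₃ y₃ hux₃ hvy₃
  have hane : a ≠ 0 := by
    intro h0
    apply huv
    have : x₁ = y₁ := by rw [hy1, h0, sub_zero]
    have hb0 : b = 0 := by rw [← he1, h0]; ring
    have : u - v = 0 := by rw [huv', h0, hb0]; rfl
    exact sub_eq_zero.mp this
  -- w determined by x
  have hw : ∀ (w : ZMod p × ZMod p) (x : ZMod p), u - w = (x, x ^ 3) →
      w = u - (x, x ^ 3) := by
    intro w x h
    rw [← h]; ring
  have hne : ∀ (i j : ZMod p × ZMod p) (xi xj : ZMod p), i ≠ j →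
      u - i = (xi, xi ^ 3) → u - j = (xj, xj ^ 3) → xi ≠ xj := by
    intro i j xi xj hij hi hj hx
    apply hij
    rw [hw i xi hi, hw j xj hj, hx]
  have pair : ∀ (xi xj : ZMod p), xi ≠ xj →
      xi ^ 3 - (xi - a) ^ 3 = b → xj ^ 3 - (xj - a) ^ 3 = b → xi + xj = a := by
    intro xi xj hij hi hj
    have h0 : 3 * a * (xi - xj) * (xi + xj - a) = 0 := by
      have : (xi ^ 3 - (xi - a) ^ 3) - (xj ^ 3 - (xj - a) ^ 3) = 0 := by
        rw [hi, hj, sub_self]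
      linear_combination this
    rcases mul_eq_zero.mp h0 with h | h
    · rcases mul_eq_zero.mp h with h | h
      · exact absurd h (mul_ne_zero h3 hane)
      · exact absurd (sub_eq_zero.mp h) hij
    · linear_combination h
  have p12 := pair x₁ x₂ (hne w₁ w₂ x₁ x₂ h12 hux₁ hux₂) he1 he2
  have p13 := pair x₁ x₃ (hne w₁ w₃ x₁ x₃ h13 hux₁ hux₃) he1 he3
  have : x₂ = x₃ := by linear_combination p12 - p13
  exact hne w₂ w₃ x₂ x₃ h23 hux₂ hux₃ this
end

section
/- Let q be an odd prime power. Then there do not exist vectors x₁, x₂, x₃ ∈ 𝔽_q³ such that x₁·x₂ = x₁·x₃ = x₂·x₃ = 0 and each of x₁·x₁, x₂·x₂, x₃·x₃ is a non-square in 𝔽_q. In other words, the induced subgraph of the Erdős–Rényi orthogonal polarity graph on the non-square points is triangle-free. -/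
open Matrix

/-- In a finite field of odd order (i.e. `𝔽_q` with `q` an odd prime power), there are
no three pairwise orthogonal vectors in `𝔽_q³` all of whose self dot products are
non-squares: the induced subgraph of the Erdős–Rényi orthogonal polarity graph on the
non-square points is triangle-free. -/
theorem stmt_13 (F : Type) [Field F] [Fintype F] (hodd : Odd (Fintype.card F)) :
    ¬ ∃ x₁ x₂ x₃ : Fin 3 → F,
      dotProduct x₁ x₂ = 0 ∧ dotProduct x₁ x₃ = 0 ∧ dotProduct x₂ x₃ = 0 ∧
      (¬ ∃ a : F, dotProduct x₁ x₁ = a ^ 2) ∧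
      (¬ ∃ a : F, dotProduct x₂ x₂ = a ^ 2) ∧
      (¬ ∃ a : F, dotProduct x₃ x₃ = a ^ 2) := by
  classical
  rintro ⟨x₁, x₂, x₃, h12, h13, h23, n1, n2, n3⟩
  set d₁ := dotProduct x₁ x₁ with hd₁
  set d₂ := dotProduct x₂ x₂ with hd₂
  set d₃ := dotProduct x₃ x₃ with hd₃
  have ns1 : ¬ IsSquare d₁ := fun ⟨a, ha⟩ => n1 ⟨a, by rw [ha, sq]⟩
  have ns2 : ¬ IsSquare d₂ := fun ⟨a, ha⟩ => n2 ⟨a, by rw [ha, sq]⟩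
  have ns3 : ¬ IsSquare d₃ := fun ⟨a, ha⟩ => n3 ⟨a, by rw [ha, sq]⟩
  have hne1 : d₁ ≠ 0 := fun h => ns1 (h ▸ IsSquare.zero)
  have hne2 : d₂ ≠ 0 := fun h => ns2 (h ▸ IsSquare.zero)
  have hne3 : d₃ ≠ 0 := fun h => ns3 (h ▸ IsSquare.zero)
  set M : Matrix (Fin 3) (Fin 3) F := Matrix.of (fun i => ![x₁, x₂, x₃] i) with hM
  have key : ∀ i j, (M * Mᵀ) i j = dotProduct (![x₁, x₂, x₃] i) (![x₁, x₂, x₃] j) := by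
    intro i j
    simp only [hM, Matrix.mul_apply, Matrix.transpose_apply, Matrix.of_apply, dotProduct]
  have hsym21 : dotProduct x₂ x₁ = 0 := by rw [dotProduct_comm]; exact h12
  have hsym31 : dotProduct x₃ x₁ = 0 := by rw [dotProduct_comm]; exact h13
  have hsym32 : dotProduct x₃ x₂ = 0 := by rw [dotProduct_comm]; exact h23
  have hMM : M * Mᵀ = Matrix.diagonal ![d₁, d₂, d₃] := by
    ext i j
    rw [key]
    fin_cases i <;> fin_cases j <;>
      simp only [Matrix.cons_val_zero, Matrix.cons_val_one, Matrix.head_cons,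
        Matrix.cons_val_two, Matrix.tail_cons, Matrix.diagonal_apply, Fin.zero_eta,
        Fin.mk_one, if_true, if_false, Matrix.diagonal] <;>
      first
        | rfl
        | simp [h12, h13, h23, hsym21, hsym31, hsym32, ← hd₁, ← hd₂, ← hd₃]
  have hdet : det M * det M = d₁ * d₂ * d₃ := by
    have := congrArg Matrix.det hMM
    rwa [Matrix.det_mul, Matrix.det_transpose, Matrix.det_diagonal,
      Fin.prod_univ_three] at this
  have hdetne : det M ≠ 0 := by
    intro h
    rw [h, mul_zero] at hdet
    exact hne1 (by
      have := mul_ne_zero (mul_ne_zero hne1 hne2) hne3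
      exact absurd hdet.symm this)
  have hq : quadraticChar F (d₁ * d₂ * d₃) = -1 := by
    rw [_root_.map_mul, _root_.map_mul,
      quadraticChar_neg_one_iff_not_isSquare.mpr ns1,
      quadraticChar_neg_one_iff_not_isSquare.mpr ns2,
      quadraticChar_neg_one_iff_not_isSquare.mpr ns3]
    ring
  rw [← hdet, _root_.map_mul] at hq
  rcases quadraticChar_dichotomy (F := F) hdetne with h | h <;> rw [h] at hq <;> norm_num at hq
end

section
/- Let q be a prime power, t ≥ 2 an integer, and let AK(t, q) denote the graph whose vertices are the projective equivalence classes [x] of vectors x ∈ 𝔽_q^{t+1} with x·x ≠ 0, with two distinct classes [x], [y] adjacent if and only if x·y = 0; define AK(t−1, q) on 𝔽_q^t analogously. Let v ∈ 𝔽_q^{t+1} satisfy v·v ≠ 0 and suppose e′₁, …, e′_t is an orthonormal basis of the hyperplane v^⊥ = {w ∈ 𝔽_q^{t+1} : w·v = 0}, i.e., e′_i · e′_j equals 1 if i = j and 0 otherwise. Then the induced subgraph of AK(t, q) on the neighbourhood N([v]) of the vertex [v] is isomorphic to AK(t−1, q); indeed the linear map sending the i-th standard basis vector of 𝔽_q^t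 to e′_i induces such a graph isomorphism. -/
open Matrix

/-- Projective equivalence on the non-absolute vectors of `𝔽_q^r`:
`x ≈ y` iff `x = a • y` for some nonzero scalar `a`. -/
def projSetoid (F : Type) [Field F] (r : ℕ) :
    Setoid {x : Fin r → F // dotProduct x x ≠ 0} where
  r x y := ∃ a : F, a ≠ 0 ∧ x.1 = a • y.1
  iseqv := by
    constructor
    · intro x; exact ⟨1, one_ne_zero, (one_smul _ _).symm⟩
    · rintro x y ⟨a, ha, h⟩
      exact ⟨a⁻¹, inv_ne_zero ha, by rw [h, smul_smul, inv_mul_cancel₀ ha, one_smul]⟩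
    · rintro x y z ⟨a, ha, h⟩ ⟨b, hb, h'⟩
      exact ⟨a * b, mul_ne_zero ha hb, by rw [h, h', smul_smul]⟩

/-- The Alon–Krivelevich graph `AK(r, q)` : vertices are projective classes of vectors
`x ∈ 𝔽_q^{r+... }` (here of `Fin r → F`) with `x ⬝ᵥ x ≠ 0`, two distinct classes being
adjacent iff `x ⬝ᵥ y = 0`. (Thus `AK F r` is the graph denoted `AK(r-1, q)` in the paper,
its vertices living in the `r`-dimensional vector space.) -/
def AK (F : Type) [Field F] (r : ℕ) : SimpleGraph (Quotient (projSetoid F r)) where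
  Adj u v := u ≠ v ∧ Quotient.liftOn₂ u v (fun x y => dotProduct x.1 y.1 = 0)
    (by
      rintro x y x' y' ⟨a, ha, hx⟩ ⟨b, hb, hy⟩
      simp only [eq_iff_iff]
      rw [hx, hy, smul_dotProduct, dotProduct_smul, smul_eq_mul, smul_eq_mul]
      constructor
      · intro h
        rcases mul_eq_zero.mp h with h | h
        · exact absurd h ha
        · rcases mul_eq_zero.mp h with h | h
          · exact absurd h hb
          · exact h
      · intro h; rw [h, mul_zero, mul_zero])
  symm := by
    constructor
    rintro u v ⟨hne, h⟩
    refine ⟨hne.symm, ?_⟩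
    induction u using Quotient.ind
    induction v using Quotient.ind
    simpa [dotProduct_comm] using h
  loopless := ⟨fun u h => h.1 rfl⟩

section Aux
variable {F : Type} [Field F] {t : ℕ}

lemma mySum_dotProduct {n m : ℕ} (s : Finset (Fin n)) (f : Fin n → (Fin m → F)) (g : Fin m → F) :
    dotProduct (∑ i ∈ s, f i) g = ∑ i ∈ s, dotProduct (f i) g := by
  simp [dotProduct, Finset.sum_apply, Finset.sum_mul]
  exact Finset.sum_comm

variable {e' : Fin t → (Fin (t + 1) → F)} {v : Fin (t + 1) → F}

lemma phi_dot_e' (horth : ∀ i j, dotProduct (e' i) (e' j) = if i = j then 1 else 0)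
    (x : Fin t → F) (j : Fin t) :
    dotProduct (∑ i, x i • e' i) (e' j) = x j := by
  rw [mySum_dotProduct]
  simp [smul_dotProduct, horth, Finset.sum_ite_eq']

lemma myDotProduct_sum {n m : ℕ} (g : Fin m → F) (s : Finset (Fin n)) (f : Fin n → (Fin m → F)) :
    dotProduct g (∑ i ∈ s, f i) = ∑ i ∈ s, dotProduct g (f i) := by
  rw [dotProduct_comm, mySum_dotProduct]
  simp [dotProduct_comm]

lemma phi_dot_phi (horth : ∀ i j, dotProduct (e' i) (e' j) = if i = j then 1 else 0)
    (x y : Fin t → F) :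
    dotProduct (∑ i, x i • e' i) (∑ i, y i • e' i) = dotProduct x y := by
  rw [myDotProduct_sum]
  simp only [dotProduct_smul, smul_eq_mul, phi_dot_e' horth]
  simp [dotProduct, mul_comm]

lemma phi_dot_v (hperp : ∀ i, dotProduct (e' i) v = 0) (x : Fin t → F) :
    dotProduct (∑ i, x i • e' i) v = 0 := by
  rw [mySum_dotProduct]
  simp [smul_dotProduct, hperp]

lemma phi_smul (a : F) (x : Fin t → F) :
    (∑ i, (a • x) i • e' i) = a • ∑ i, x i • e' i := by
  rw [Finset.smul_sum]
  simp [smul_smul]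

/-- The family `e'` together with `v` is a basis, so anything perpendicular to `v`
is in the span of `e'`. -/
lemma eq_phi_of_perp (horth : ∀ i j, dotProduct (e' i) (e' j) = if i = j then 1 else 0)
    (hperp : ∀ i, dotProduct (e' i) v = 0) (hv : dotProduct v v ≠ 0)
    (w : Fin (t + 1) → F) (hw : dotProduct w v = 0) :
    w = ∑ i, dotProduct w (e' i) • e' i := by
  classical
  set f : Fin (t + 1) → (Fin (t + 1) → F) := Fin.snoc e' v with hf
  have hfe : ∀ j : Fin t, f j.castSucc = e' j := fun j => Fin.snoc_castSucc _ _ _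
  have hflast : f (Fin.last t) = v := Fin.snoc_last _ _
  have hli : LinearIndependent F f := by
    rw [Fintype.linearIndependent_iff]
    intro g hg
    have hdot : ∀ j, dotProduct (∑ i, g i • f i) (f j) = 0 := by
      intro j; rw [hg]; simp [dotProduct]
    intro i
    have h := hdot i
    rw [mySum_dotProduct] at h
    simp only [smul_dotProduct, smul_eq_mul] at h
    induction i using Fin.lastCases with
    | last =>
      have heach : ∀ i, g i * dotProduct (f i) (f (Fin.last t)) =
          if i = Fin.last t then g i * dotProduct v v else 0 := by
        intro i
        induction i using Fin.lastCases with
        | last => simp [hflast]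
        | cast k =>
          have hne : (k.castSucc : Fin (t+1)) ≠ Fin.last t := (Fin.castSucc_lt_last k).ne
          simp [hne, hfe, hflast, hperp]
      rw [Finset.sum_congr rfl (fun i _ => heach i)] at h
      rw [Finset.sum_ite_eq' Finset.univ (Fin.last t)] at h
      simp only [Finset.mem_univ, if_pos, mul_eq_zero] at h
      rcases h with h | h
      · exact h
      · exact absurd h hv
    | cast j =>
      have heach : ∀ i, g i * dotProduct (f i) (f j.castSucc) =
          if i = j.castSucc then g i else 0 := by
        intro i
        induction i using Fin.lastCases with
        | last =>
          have hne : (Fin.last t) ≠ j.castSucc := (Fin.castSucc_lt_last j).ne'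
          simp [hne, hflast, hfe, dotProduct_comm v (e' j), hperp]
        | cast k =>
          rw [hfe, hfe, horth]
          by_cases hkj : k = j
          · simp [hkj]
          · have hne : (k.castSucc : Fin (t+1)) ≠ j.castSucc := by
              simpa [Fin.castSucc_inj] using hkj
            simp [hkj, hne]
      rw [Finset.sum_congr rfl (fun i _ => heach i)] at h
      rwa [Finset.sum_ite_eq' Finset.univ j.castSucc, if_pos (Finset.mem_univ _)] at h
  have hcard : Fintype.card (Fin (t + 1)) = Module.finrank F (Fin (t + 1) → F) := by
    simp [Module.finrank_fin_fun]
  let b : Module.Basis (Fin (t + 1)) F (Fin (t + 1) → F) :=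
    basisOfLinearIndependentOfCardEqFinrank hli hcard
  have hb : ∀ i, b i = f i := fun i =>
    congrFun (coe_basisOfLinearIndependentOfCardEqFinrank hli hcard) i
  set u : Fin (t + 1) → F := w - ∑ i, dotProduct w (e' i) • e' i with hu
  have hu_f : ∀ j, dotProduct u (f j) = 0 := by
    intro j
    induction j using Fin.lastCases with
    | last =>
      rw [hflast, hu, sub_dotProduct, hw, phi_dot_v hperp, sub_zero]
    | cast j =>
      rw [hfe, hu, sub_dotProduct, phi_dot_e' horth, sub_self]
  have hu0 : u = 0 := by
    funext k
    have hz : dotProduct u (Pi.single k 1) = 0 := by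
      have hrepr := Module.Basis.sum_repr b (Pi.single k (1 : F))
      rw [← hrepr, dotProduct_comm, mySum_dotProduct]
      simp only [smul_dotProduct, smul_eq_mul]
      apply Finset.sum_eq_zero
      intro i _
      rw [hb, dotProduct_comm, hu_f i, mul_zero]
    rw [dotProduct_single, mul_one] at hz
    simpa using hz
  exact sub_eq_zero.mp hu0

end Aux

/-- The induced subgraph of `AK(t, q)` (on projective classes of vectors of
`𝔽_q^{t+1}`) on the neighbourhood of a vertex `[v]` is isomorphic to `AK(t-1, q)`
(on projective classes of vectors of `𝔽_q^t`); the isomorphism is induced by the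
linear map sending the `i`-th standard basis vector to `e'_i`, where `e'_1, …, e'_t`
is an orthonormal basis of the hyperplane `v^⊥`. -/
theorem stmt_15 (F : Type) [Field F] [Fintype F] (t : ℕ) (ht : 2 ≤ t)
    (v : Fin (t + 1) → F) (hv : dotProduct v v ≠ 0)
    (e' : Fin t → (Fin (t + 1) → F))
    (horth : ∀ i j, dotProduct (e' i) (e' j) = if i = j then 1 else 0)
    (hperp : ∀ i, dotProduct (e' i) v = 0) :
    ∃ iso : (AK F t) ≃g ((AK F (t + 1)).induce
        {w | (AK F (t + 1)).Adj (Quotient.mk (projSetoid F (t + 1)) ⟨v, hv⟩) w}),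
      ∀ x : {x : Fin t → F // dotProduct x x ≠ 0},
        ∃ h : dotProduct (∑ i, x.1 i • e' i) (∑ i, x.1 i • e' i) ≠ 0,
          (iso (Quotient.mk (projSetoid F t) x) : Quotient (projSetoid F (t + 1))) =
            Quotient.mk (projSetoid F (t + 1)) ⟨∑ i, x.1 i • e' i, h⟩ := by
  classical
  set N : Set (Quotient (projSetoid F (t + 1))) :=
    {w | (AK F (t + 1)).Adj (Quotient.mk (projSetoid F (t + 1)) ⟨v, hv⟩) w} with hN
  -- the vector-level map
  let f : {x : Fin t → F // dotProduct x x ≠ 0} →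
      {w : Fin (t + 1) → F // dotProduct w w ≠ 0} :=
    fun x => ⟨∑ i, x.1 i • e' i, by rw [phi_dot_phi horth]; exact x.2⟩
  have hresp : ∀ x y, (projSetoid F t).r x y → (projSetoid F (t + 1)).r (f x) (f y) := by
    rintro x y ⟨a, ha, hxy⟩
    refine ⟨a, ha, ?_⟩
    show (∑ i, x.1 i • e' i) = a • ∑ i, y.1 i • e' i
    rw [hxy, ← phi_smul]
  let fq : Quotient (projSetoid F t) → Quotient (projSetoid F (t + 1)) :=
    Quotient.map f hresp
  -- image lies in the neighbourhood
  have hmem : ∀ q, fq q ∈ N := by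
    intro q
    induction q using Quotient.ind with
    | _ x =>
      show (AK F (t + 1)).Adj (Quotient.mk (projSetoid F (t + 1)) ⟨v, hv⟩)
        (Quotient.mk (projSetoid F (t + 1)) (f x))
      constructor
      · intro heq
        obtain ⟨a, ha, hva⟩ := Quotient.exact heq
        apply hv
        have hva' : v = a • ∑ i, x.1 i • e' i := hva
        nth_rewrite 2 [hva']
        rw [dotProduct_smul, smul_eq_mul, dotProduct_comm, phi_dot_v hperp, mul_zero]
      · show dotProduct v (f x).1 = 0
        rw [dotProduct_comm]
        exact phi_dot_v hperp _
  -- injectivity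
  have hinj : Function.Injective fq := by
    intro q₁ q₂ h
    induction q₁ using Quotient.ind with
    | _ x =>
      induction q₂ using Quotient.ind with
      | _ y =>
        obtain ⟨a, ha, hxy⟩ := Quotient.exact h
        apply Quotient.sound
        refine ⟨a, ha, funext fun j => ?_⟩
        have h1 : dotProduct (f x).1 (e' j) = x.1 j := phi_dot_e' horth _ j
        have h2 : dotProduct (f y).1 (e' j) = y.1 j := phi_dot_e' horth _ j
        rw [← h1, hxy, smul_dotProduct, h2]
        rfl
  -- the equivalence onto the neighbourhood
  have hsurj : ∀ p : N, ∃ q, (⟨fq q, hmem q⟩ : N) = p := by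
    rintro ⟨q, hq⟩
    induction q using Quotient.ind with
    | _ w =>
      have hwv : dotProduct w.1 v = 0 := by
        rw [dotProduct_comm]
        exact hq.2
      have hphi : w.1 = ∑ i, dotProduct w.1 (e' i) • e' i :=
        eq_phi_of_perp horth hperp hv w.1 hwv
      set x : Fin t → F := fun i => dotProduct w.1 (e' i) with hx
      have hxx : dotProduct x x ≠ 0 := by
        rw [← phi_dot_phi horth, ← hphi]
        exact w.2
      refine ⟨Quotient.mk (projSetoid F t) ⟨x, hxx⟩, ?_⟩
      apply Subtype.ext
      show Quotient.mk (projSetoid F (t + 1)) (f ⟨x, hxx⟩) = Quotient.mk _ w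
      congr 1
      exact Subtype.ext hphi.symm
  let e : Quotient (projSetoid F t) ≃ N :=
    Equiv.ofBijective (fun q => ⟨fq q, hmem q⟩)
      ⟨fun a b h => hinj (congrArg Subtype.val h), hsurj⟩
  have hmap : ∀ q₁ q₂, ((AK F (t + 1)).induce N).Adj (e q₁) (e q₂) ↔ (AK F t).Adj q₁ q₂ := by
    intro q₁ q₂
    induction q₁ using Quotient.ind with
    | _ x =>
      induction q₂ using Quotient.ind with
      | _ y =>
        show (AK F (t + 1)).Adj (fq (Quotient.mk _ x)) (fq (Quotient.mk _ y)) ↔ _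
        constructor
        · rintro ⟨hne, hdot⟩
          refine ⟨fun h => hne (congrArg fq h), ?_⟩
          show dotProduct x.1 y.1 = 0
          rw [← phi_dot_phi horth]
          exact hdot
        · rintro ⟨hne, hdot⟩
          refine ⟨fun h => hne (hinj h), ?_⟩
          show dotProduct (f x).1 (f y).1 = 0
          rw [phi_dot_phi horth]
          exact hdot
  refine ⟨⟨e, hmap _ _⟩, fun x => ⟨(f x).2, rfl⟩⟩
end
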